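/- arXiv:2208.14561 — 11 statements merged into one kernel-verified Lean document; each statement's English description precedes it below -/
import Mathlib

section
/- Let (g, B) be a quadratic Lie algebra and S a commutative associative unital algebra. If Ψ : g⊗S → (g⊗S)* is a morphism of g⊗S-modules (i.e. Ψ([u,v]) = −Ψ(v) ∘ ad(u) in the coadjoint sense, equivalently Ψ([u,v])(w) = Ψ(u)([v,w]) for all u,v,w in g⊗S), then for each s,s' in S the map α(s,s') : g → g defined by α(s,s')(x) = B^♯(Ψ*(x⊗s) ∘ ι_{s'}) — equivalently characterized by B(z, α(s,s')([x,y])) = Ψ(z⊗s)([x,y]⊗s') — is a centroid of g, i.e. α(s,s') ∘ ad(x) = ad(α(s,s')(x)) for all x in g. -/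
open TensorProduct

/-- If `Ψ : g⊗S → (g⊗S)*` is a morphism of `g⊗S`-modules, then for all `s, s'` in `S`
the map `α(s,s') : g → g` characterized by `B(z, α(s,s')(x)) = Ψ(z⊗s)(x⊗s')`
is a centroid of `g`. -/
theorem psi_gives_centroid
    (F : Type*) [Field F] [CharZero F]
    (g : Type*) [LieRing g] [LieAlgebra F g] [Module.Finite F g]
    (S : Type*) [CommRing S] [Algebra F S] [Module.Finite F S]
    (B : LinearMap.BilinForm F g)
    (hBsymm : ∀ x y : g, B x y = B y x)
    (hBnd : ∀ x : g, (∀ y : g, B x y = 0) → x = 0)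
    (hBinv : ∀ x y z : g, B x ⁅y, z⁆ = B ⁅x, y⁆ z)
    (Ψ : (S ⊗[F] g) →ₗ[F] Module.Dual F (S ⊗[F] g))
    (hΨ : ∀ u v w : S ⊗[F] g, Ψ ⁅u, v⁆ w = Ψ u ⁅v, w⁆)
    (s s' : S) (A : g →ₗ[F] g)
    (hA : ∀ z x : g, B z (A x) = Ψ (s ⊗ₜ[F] z) (s' ⊗ₜ[F] x)) :
    ∀ x y : g, A ⁅x, y⁆ = ⁅A x, y⁆ := by
  intro x y
  have key : ∀ z : g, B z (A ⁅x, y⁆) = B z ⁅A x, y⁆ := by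
    intro z
    have h1 : B ⁅z, y⁆ (A x) = B z (A ⁅y, x⁆) := by
      rw [hA, hA]
      have ht : (s ⊗ₜ[F] ⁅z, y⁆ : S ⊗[F] g) = ⁅s ⊗ₜ[F] z, (1 : S) ⊗ₜ[F] y⁆ := by
        rw [LieAlgebra.ExtendScalars.bracket_tmul, mul_one]
      have ht2 : (⁅(1 : S) ⊗ₜ[F] y, s' ⊗ₜ[F] x⁆ : S ⊗[F] g) = s' ⊗ₜ[F] ⁅y, x⁆ := by
        rw [LieAlgebra.ExtendScalars.bracket_tmul, one_mul]
      rw [ht, hΨ, ht2]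
    have h2 : B z ⁅A x, y⁆ = - B ⁅z, y⁆ (A x) := by
      rw [← hBinv]
      rw [show (⁅y, A x⁆ : g) = -⁅A x, y⁆ from (lie_skew y (A x)).symm, map_neg, neg_neg]
    rw [h2, h1]
    rw [show (⁅y, x⁆ : g) = -⁅x, y⁆ from (lie_skew y x).symm, map_neg, map_neg, neg_neg]
  have hdiff : A ⁅x, y⁆ - ⁅A x, y⁆ = 0 := by
    apply hBnd
    intro z
    rw [hBsymm]
    simp [key z]
  exact sub_eq_zero.mp hdiff
end

section
/- Let (g, B) be a quadratic Lie algebra and S a commutative associative unital algebra. There exists a morphism of g⊗S-modules Ψ : g⊗S → (g⊗S)* if and only if there exists a bilinear map α : S × S → Γ(g) (the space of centroids of g) such that α(s,s')(z) = α(ss',1)(z) for all s,s' in S and all z in [g,g]. -/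
open TensorProduct

/-- For a quadratic Lie algebra `(g,B)` and a commutative associative unital algebra `S`,
there is a morphism of `g⊗S`-modules `Ψ : g⊗S → (g⊗S)*` iff there is a bilinear map
`α : S × S → Γ(g)` into the centroids of `g` with `α(s,t)(z) = α(st,1)(z)` for all
`z ∈ [g,g]`. -/
theorem module_morphism_iff_centroid_map
    (F : Type*) [Field F] [CharZero F]
    (g : Type*) [LieRing g] [LieAlgebra F g] [Module.Finite F g]
    (S : Type*) [CommRing S] [Algebra F S] [Module.Finite F S]
    (B : LinearMap.BilinForm F g)
    (hBsymm : ∀ x y : g, B x y = B y x)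
    (hBnd : ∀ x : g, (∀ y : g, B x y = 0) → x = 0)
    (hBinv : ∀ x y z : g, B x ⁅y, z⁆ = B ⁅x, y⁆ z) :
    (∃ Ψ : (S ⊗[F] g) →ₗ[F] Module.Dual F (S ⊗[F] g),
        ∀ u v w : S ⊗[F] g, Ψ ⁅u, v⁆ w = Ψ u ⁅v, w⁆) ↔
    (∃ α : S →ₗ[F] S →ₗ[F] (g →ₗ[F] g),
        (∀ (s t : S) (x y : g), α s t ⁅x, y⁆ = ⁅α s t x, y⁆) ∧
        (∀ s t : S, ∀ z ∈ Submodule.span F {w : g | ∃ x y : g, ⁅x, y⁆ = w},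
          α s t z = α (s * t) 1 z)) := by
  have hB : B.Nondegenerate := ⟨hBnd, fun y hy => hBnd y (fun x => by rw [hBsymm]; exact hy x)⟩
  have hsep : ∀ a b : g, (∀ w : g, B a w = B b w) → a = b := by
    intro a b h
    have : a - b = 0 := hBnd _ (fun w => by rw [map_sub, LinearMap.sub_apply, h, sub_self])
    exact sub_eq_zero.mp this
  constructor
  · rintro ⟨Ψ, hΨ⟩
    classical
    let D : S → S → g → Module.Dual F g := fun s t x =>
      (Ψ (s ⊗ₜ x)).comp ((TensorProduct.mk F S g) t)
    have Dadd_t : ∀ (s t₁ t₂ : S) (x : g), D s (t₁ + t₂) x = D s t₁ x + D s t₂ x :=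
      fun s t₁ t₂ x => LinearMap.ext fun y => by simp [D, TensorProduct.add_tmul]
    have Dsmul_t : ∀ (c : F) (s t : S) (x : g), D s (c • t) x = c • D s t x :=
      fun c s t x => LinearMap.ext fun y => by simp [D, ← TensorProduct.smul_tmul']
    have Dadd_s : ∀ (s₁ s₂ t : S) (x : g), D (s₁ + s₂) t x = D s₁ t x + D s₂ t x :=
      fun s₁ s₂ t x => LinearMap.ext fun y => by simp [D, TensorProduct.add_tmul]
    have Dsmul_s : ∀ (c : F) (s t : S) (x : g), D (c • s) t x = c • D s t x :=
      fun c s t x => LinearMap.ext fun y => by simp [D, ← TensorProduct.smul_tmul']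
    have Dadd_x : ∀ (s t : S) (x₁ x₂ : g), D s t (x₁ + x₂) = D s t x₁ + D s t x₂ :=
      fun s t x₁ x₂ => LinearMap.ext fun y => by simp [D, TensorProduct.tmul_add]
    have Dsmul_x : ∀ (c : F) (s t : S) (x : g), D s t (c • x) = c • D s t x :=
      fun c s t x => LinearMap.ext fun y => by simp [D, TensorProduct.tmul_smul]
    let α : S →ₗ[F] S →ₗ[F] (g →ₗ[F] g) :=
      { toFun := fun s =>
        { toFun := fun t =>
            { toFun := fun x => (B.toDual hB).symm (D s t x)
              map_add' := fun x₁ x₂ => by simp only [Dadd_x, map_add]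
              map_smul' := fun c x => by simp only [Dsmul_x, map_smul, RingHom.id_apply] }
          map_add' := fun t₁ t₂ => LinearMap.ext fun x => by
            dsimp only [LinearMap.coe_mk, AddHom.coe_mk, LinearMap.add_apply]
            simp only [Dadd_t, map_add]
          map_smul' := fun c t => LinearMap.ext fun x => by
            dsimp only [LinearMap.coe_mk, AddHom.coe_mk, RingHom.id_apply,
              LinearMap.smul_apply]
            simp only [Dsmul_t, map_smul] }
        map_add' := fun s₁ s₂ => LinearMap.ext fun t => LinearMap.ext fun x => by
          dsimp only [LinearMap.coe_mk, AddHom.coe_mk, LinearMap.add_apply]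
          simp only [Dadd_s, map_add]
        map_smul' := fun c s => LinearMap.ext fun t => LinearMap.ext fun x => by
          dsimp only [LinearMap.coe_mk, AddHom.coe_mk, RingHom.id_apply,
            LinearMap.smul_apply]
          simp only [Dsmul_s, map_smul] }
    have key : ∀ (s t : S) (x y : g), B (α s t x) y = Ψ (s ⊗ₜ x) (t ⊗ₜ y) := by
      intro s t x y
      simp only [α, LinearMap.coe_mk, AddHom.coe_mk]
      rw [LinearMap.BilinForm.apply_toDual_symm_apply]
      simp [D]
    refine ⟨α, ?_, ?_⟩
    · intro s t x y
      apply hsep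
      intro w
      rw [key]
      have h1 : (s ⊗ₜ[F] ⁅x, y⁆ : S ⊗[F] g) = ⁅s ⊗ₜ[F] x, (1 : S) ⊗ₜ[F] y⁆ := by
        rw [LieAlgebra.ExtendScalars.bracket_tmul, mul_one]
      rw [h1, hΨ, LieAlgebra.ExtendScalars.bracket_tmul, one_mul, ← key, hBinv]
    · intro s t z hz
      induction hz using Submodule.span_induction with
      | mem w hw =>
        obtain ⟨x, y, rfl⟩ := hw
        apply hsep
        intro w
        rw [key, key]
        have h1 : (s ⊗ₜ[F] ⁅x, y⁆ : S ⊗[F] g) = ⁅s ⊗ₜ[F] x, (1 : S) ⊗ₜ[F] y⁆ := by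
          rw [LieAlgebra.ExtendScalars.bracket_tmul, mul_one]
        have h2 : ((s * t) ⊗ₜ[F] ⁅x, y⁆ : S ⊗[F] g) = ⁅s ⊗ₜ[F] x, t ⊗ₜ[F] y⁆ := by
          rw [LieAlgebra.ExtendScalars.bracket_tmul]
        rw [h1, h2, hΨ, hΨ, LieAlgebra.ExtendScalars.bracket_tmul,
          LieAlgebra.ExtendScalars.bracket_tmul, one_mul, mul_one]
      | zero => simp
      | add u v _ _ hu hv => simp [map_add, hu, hv]
      | smul c u _ hu => simp [map_smul, hu]
  · rintro ⟨α, h1, h2⟩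
    let T : S →ₗ[F] g →ₗ[F] Module.Dual F (S ⊗[F] g) :=
      { toFun := fun s =>
        { toFun := fun x => TensorProduct.lift
            { toFun := fun t => B (α s t x)
              map_add' := by intro a b; simp
              map_smul' := by intro c a; simp }
          map_add' := fun x y => TensorProduct.ext' fun t z => by simp
          map_smul' := fun c x => TensorProduct.ext' fun t z => by simp }
        map_add' := fun s₁ s₂ => LinearMap.ext fun x =>
          TensorProduct.ext' fun t z => by simp
        map_smul' := fun c s => LinearMap.ext fun x =>
          TensorProduct.ext' fun t z => by simp }
    refine ⟨TensorProduct.lift T, ?_⟩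
    have memspan : ∀ x y : g, (⁅x, y⁆ : g) ∈
        Submodule.span F {w : g | ∃ x y : g, ⁅x, y⁆ = w} :=
      fun x y => Submodule.subset_span ⟨x, y, rfl⟩
    have hpure : ∀ (s t r : S) (x y z : g),
        TensorProduct.lift T ⁅s ⊗ₜ[F] x, t ⊗ₜ[F] y⁆ (r ⊗ₜ z)
          = TensorProduct.lift T (s ⊗ₜ[F] x) ⁅t ⊗ₜ[F] y, r ⊗ₜ[F] z⁆ := by
      intro s t r x y z
      rw [LieAlgebra.ExtendScalars.bracket_tmul, LieAlgebra.ExtendScalars.bracket_tmul]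
      simp only [T, TensorProduct.lift.tmul, LinearMap.coe_mk, AddHom.coe_mk]
      have e1 : α (s * t) r ⁅x, y⁆ = α s (t * r) ⁅x, y⁆ := by
        rw [h2 (s * t) r _ (memspan x y), h2 s (t * r) _ (memspan x y), mul_assoc]
      rw [e1, h1, ← hBinv]
    intro u v w
    induction u using TensorProduct.induction_on with
    | zero => simp
    | tmul s x =>
      induction v using TensorProduct.induction_on with
      | zero => simp
      | tmul t y =>
        induction w using TensorProduct.induction_on with
        | zero => simp
        | tmul r z => exact hpure s t r x y z
        | add w₁ w₂ hw₁ hw₂ => simp only [lie_add, map_add, hw₁, hw₂]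
      | add v₁ v₂ hv₁ hv₂ =>
        simp only [lie_add, add_lie, map_add, LinearMap.add_apply] at *
        rw [hv₁, hv₂]
    | add u₁ u₂ hu₁ hu₂ =>
      simp only [add_lie, map_add, LinearMap.add_apply] at *
      rw [hu₁, hu₂]
end

section
/- Let (g,B) be a quadratic Lie algebra and S a commutative associative unital algebra. Suppose α : S × S → Γ(g) is bilinear and satisfies: (i) α(s,t)(z) = α(st,1)(z) for all z in [g,g]; (ii) ⋂_{s∈S} Ker(F(s)) = {0}, where F(s) : g⊗S → g is determined by F(s)(x⊗t) = α(s,t)(x); (iii) B(α(s,t)(x), y) = B(x, α(t,s)(y)) for all x,y in g and s,t in S. Then the bilinear form B̄ on g⊗S defined by B̄(x⊗s, y⊗t) = B(α(t,s)(x), y) is an invariant metric: symmetric, non-degenerate, and B̄(u,[v,w]) = B̄([u,v],w) for all u,v,w in g⊗S. -/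
open TensorProduct

/-- If `α : S × S → Γ(g)` is bilinear with values in centroids of `g` and satisfies
(i) `α(s,t) = α(st,1)` on `[g,g]`, (ii) `⋂ₛ Ker F(s) = 0` where `F(s)(x⊗t) = α(s,t)(x)`,
and (iii) `B(α(s,t)x, y) = B(x, α(t,s)y)`, then `B̄(x⊗s, y⊗t) = B(α(t,s)x, y)` is an
invariant metric on the current Lie algebra `g ⊗ S`. -/
theorem alpha_gives_invariant_metric
    (F : Type*) [Field F] [CharZero F]
    (g : Type*) [LieRing g] [LieAlgebra F g] [Module.Finite F g]
    (S : Type*) [CommRing S] [Algebra F S] [Module.Finite F S]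
    (B : LinearMap.BilinForm F g)
    (hBsymm : ∀ x y : g, B x y = B y x)
    (hBnd : ∀ x : g, (∀ y : g, B x y = 0) → x = 0)
    (hBinv : ∀ x y z : g, B x ⁅y, z⁆ = B ⁅x, y⁆ z)
    (α : S →ₗ[F] S →ₗ[F] (g →ₗ[F] g))
    (hcent : ∀ (s t : S) (x y : g), α s t ⁅x, y⁆ = ⁅α s t x, y⁆)
    (h1 : ∀ s t : S, ∀ z ∈ Submodule.span F {w : g | ∃ x y : g, ⁅x, y⁆ = w},
      α s t z = α (s * t) 1 z)
    (h2 : ⨅ s : S, LinearMap.ker (TensorProduct.lift (α s)) = (⊥ : Submodule F (S ⊗[F] g)))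
    (h3 : ∀ (s t : S) (x y : g), B (α s t x) y = B x (α t s y)) :
    ∃ Bbar : LinearMap.BilinForm F (S ⊗[F] g),
      (∀ (s t : S) (x y : g), Bbar (s ⊗ₜ[F] x) (t ⊗ₜ[F] y) = B (α t s x) y) ∧
      (∀ u v : S ⊗[F] g, Bbar u v = Bbar v u) ∧
      (∀ u : S ⊗[F] g, (∀ v : S ⊗[F] g, Bbar u v = 0) → u = 0) ∧
      (∀ u v w : S ⊗[F] g, Bbar ⁅u, v⁆ w = Bbar u ⁅v, w⁆) := by
  set Bbar : LinearMap.BilinForm F (S ⊗[F] g) :=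
    TensorProduct.lift <| LinearMap.mk₂ F
      (fun s x => TensorProduct.lift <| LinearMap.mk₂ F (fun t y => B (α t s x) y)
        (by intro t t' y; simp) (by intro c t y; simp) (by intro t y y'; simp)
        (by intro c t y; simp))
      (by intro s s' x; apply TensorProduct.ext'; intro t y; simp)
      (by intro c s x; apply TensorProduct.ext'; intro t y; simp)
      (by intro s x x'; apply TensorProduct.ext'; intro t y; simp)
      (by intro c s x; apply TensorProduct.ext'; intro t y; simp) with hBbar
  have htmul : ∀ (s t : S) (x y : g), Bbar (s ⊗ₜ[F] x) (t ⊗ₜ[F] y) = B (α t s x) y := by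
    intro s t x y; simp [hBbar]
  refine ⟨Bbar, htmul, ?_, ?_, ?_⟩
  · -- symmetry
    intro u v
    induction u using TensorProduct.induction_on with
    | zero => simp
    | tmul s x =>
      induction v using TensorProduct.induction_on with
      | zero => simp
      | tmul t y =>
        rw [htmul, htmul, hBsymm, h3]
      | add v w hv hw => simp [map_add, hv, hw]
    | add u w hu hw => simp [map_add, hu, hw]
  · -- nondegenerate
    intro u hu
    have key : ∀ s : S, TensorProduct.lift (α s) u = 0 := by
      intro s
      apply hBnd
      intro y
      have : ∀ w : S ⊗[F] g, B (TensorProduct.lift (α s) w) y = Bbar w (s ⊗ₜ[F] y) := by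
        intro w
        induction w using TensorProduct.induction_on with
        | zero => simp
        | tmul t x => rw [htmul]; simp
        | add v w hv hw => simp [map_add, hv, hw]
      rw [this, hu]
    have : u ∈ ⨅ s : S, LinearMap.ker (TensorProduct.lift (α s)) := by
      simp only [Submodule.mem_iInf, LinearMap.mem_ker]; exact key
    rw [h2] at this
    simpa using this
  · -- invariance
    intro u v w
    induction u using TensorProduct.induction_on with
    | zero => simp
    | tmul s x =>
      induction v using TensorProduct.induction_on with
      | zero => simp
      | tmul t y =>
        induction w using TensorProduct.induction_on with
        | zero => simp
        | tmul r z =>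
          rw [LieAlgebra.ExtendScalars.bracket_tmul, LieAlgebra.ExtendScalars.bracket_tmul,
            htmul, htmul]
          have hmem : ∀ a b : g, ⁅a, b⁆ ∈ Submodule.span F {w : g | ∃ x y : g, ⁅x, y⁆ = w} :=
            fun a b => Submodule.subset_span ⟨a, b, rfl⟩
          rw [h1 r (s * t) _ (hmem x y)]
          rw [h3 (t * r) s x ⁅y, z⁆, h1 s (t * r) _ (hmem y z),
            show s * (t * r) = 1 * (s * (t * r)) by ring,
            ← h1 1 (s * (t * r)) _ (hmem y z), ← h3 (s * (t * r)) 1 x ⁅y, z⁆,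
            hBinv, ← hcent]
          ring_nf
        | add w w' hw hw' => simp only [lie_add, map_add, hw, hw']
      | add v v' hv hv' => simp only [lie_add, add_lie, map_add, LinearMap.add_apply, hv, hv']
    | add u u' hu hu' => simp only [add_lie, map_add, LinearMap.add_apply, hu, hu']
end

section
/- Let (g,B) be a quadratic Lie algebra and S a commutative associative unital algebra. If the current Lie algebra g⊗S admits an invariant metric B̄, then there exists a bilinear map α : S × S → Γ(g) satisfying: (i) α(s,t)(z) = α(st,1)(z) for all z in [g,g]; (ii) ⋂_{s∈S} Ker(F(s)) = {0}, where F(s)(x⊗t) = α(s,t)(x); (iii) B(α(s,t)(x), y) = B(x, α(t,s)(y)) for all x,y in g, s,t in S; and moreover B̄(x⊗s, y⊗t) = B(α(t,s)(x), y). -/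
open TensorProduct

/-- If the current Lie algebra `g ⊗ S` of a quadratic Lie algebra `(g,B)` admits an
invariant metric `B̄`, then there is a bilinear map `α : S × S → Γ(g)` with values
in the centroids of `g` satisfying (i) `α(s,t) = α(st,1)` on `[g,g]`,
(ii) `⋂ₛ Ker F(s) = 0` where `F(s)(x⊗t) = α(s,t)(x)`,
(iii) `B(α(s,t)x, y) = B(x, α(t,s)y)`, and `B̄(x⊗s, y⊗t) = B(α(t,s)x, y)`. -/
theorem invariant_metric_gives_alpha
    (F : Type*) [Field F] [CharZero F]
    (g : Type*) [LieRing g] [LieAlgebra F g] [Module.Finite F g]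
    (S : Type*) [CommRing S] [Algebra F S] [Module.Finite F S]
    (B : LinearMap.BilinForm F g)
    (hBsymm : ∀ x y : g, B x y = B y x)
    (hBnd : ∀ x : g, (∀ y : g, B x y = 0) → x = 0)
    (hBinv : ∀ x y z : g, B x ⁅y, z⁆ = B ⁅x, y⁆ z)
    (Bbar : LinearMap.BilinForm F (S ⊗[F] g))
    (hsymm : ∀ u v : S ⊗[F] g, Bbar u v = Bbar v u)
    (hnd : ∀ u : S ⊗[F] g, (∀ v : S ⊗[F] g, Bbar u v = 0) → u = 0)
    (hinv : ∀ u v w : S ⊗[F] g, Bbar ⁅u, v⁆ w = Bbar u ⁅v, w⁆) :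
    ∃ α : S →ₗ[F] S →ₗ[F] (g →ₗ[F] g),
      (∀ (s t : S) (x y : g), α s t ⁅x, y⁆ = ⁅α s t x, y⁆) ∧
      (∀ s t : S, ∀ z ∈ Submodule.span F {w : g | ∃ x y : g, ⁅x, y⁆ = w},
        α s t z = α (s * t) 1 z) ∧
      (⨅ s : S, LinearMap.ker (TensorProduct.lift (α s)) = (⊥ : Submodule F (S ⊗[F] g))) ∧
      (∀ (s t : S) (x y : g), B (α s t x) y = B x (α t s y)) ∧
      (∀ (s t : S) (x y : g), Bbar (s ⊗ₜ[F] x) (t ⊗ₜ[F] y) = B (α t s x) y) := by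
  haveI : FiniteDimensional F g := inferInstance
  -- B is a bijection onto the dual
  have hinj : Function.Injective B := by
    rw [← LinearMap.ker_eq_bot, Submodule.eq_bot_iff]
    intro x hx
    exact hBnd x fun y => by
      simpa using congrArg (fun f => f y) (LinearMap.mem_ker.mp hx)
  have hbij : Function.Bijective B :=
    ⟨hinj, (LinearMap.injective_iff_surjective_of_finrank_eq_finrank
      (Subspace.dual_finrank_eq).symm).mp hinj⟩
  set e : g ≃ₗ[F] Module.Dual F g := LinearEquiv.ofBijective B hbij with he
  -- the bilinear family α
  set α : S →ₗ[F] S →ₗ[F] (g →ₗ[F] g) := LinearMap.mk₂ F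
      (fun s t => e.symm.toLinearMap ∘ₗ (LinearMap.lcomp F F (TensorProduct.mk F S g s)) ∘ₗ
        Bbar ∘ₗ (TensorProduct.mk F S g t))
      (by intro s₁ s₂ t; ext x; simp only [LinearMap.add_apply, LinearMap.smul_apply, LinearMap.comp_apply, LinearEquiv.coe_coe]; rw [← map_add]; congr 1; ext y; simp [add_tmul])
      (by intro c s t; ext x; simp only [LinearMap.add_apply, LinearMap.smul_apply, LinearMap.comp_apply, LinearEquiv.coe_coe]; rw [← map_smul]; congr 1; ext y; simp [← smul_tmul', map_smul])
      (by intro s t₁ t₂; ext x; simp only [LinearMap.add_apply, LinearMap.smul_apply, LinearMap.comp_apply, LinearEquiv.coe_coe]; rw [← map_add]; congr 1; ext y; simp [add_tmul])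
      (by intro c s t; ext x; simp only [LinearMap.add_apply, LinearMap.smul_apply, LinearMap.comp_apply, LinearEquiv.coe_coe]; rw [← map_smul]; congr 1; ext y; simp [← smul_tmul', map_smul]) with hαdef
  -- the defining property of α
  have hα : ∀ (s t : S) (x y : g), B (α s t x) y = Bbar (t ⊗ₜ[F] x) (s ⊗ₜ[F] y) := by
    intro s t x y
    have h1 : α s t x = e.symm ((LinearMap.lcomp F F (TensorProduct.mk F S g s))
        (Bbar (t ⊗ₜ[F] x))) := rfl
    have h2 : (B (α s t x) : Module.Dual F g) = e (α s t x) := rfl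
    rw [h2, h1, e.apply_symm_apply]
    rfl
  -- extensionality via nondegeneracy of B
  have hext : ∀ a b : g, (∀ y : g, B a y = B b y) → a = b := by
    intro a b h
    have : a - b = 0 := hBnd (a - b) fun y => by
      simp [map_sub, LinearMap.sub_apply, h y]
    exact sub_eq_zero.mp this
  refine ⟨α, ?_, ?_, ?_, ?_, ?_⟩
  · -- centroid property
    intro s t x y
    refine hext _ _ fun z => ?_
    rw [hα]
    have h1 : t ⊗ₜ[F] ⁅x, y⁆ = ⁅(t : S) ⊗ₜ[F] x, (1 : S) ⊗ₜ[F] y⁆ := by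
      rw [LieAlgebra.ExtendScalars.bracket_tmul, mul_one]
    rw [h1, hinv]
    have h2 : ⁅(1 : S) ⊗ₜ[F] y, s ⊗ₜ[F] z⁆ = s ⊗ₜ[F] ⁅y, z⁆ := by
      rw [LieAlgebra.ExtendScalars.bracket_tmul, one_mul]
    rw [h2, ← hα, hBinv]
  · -- α(s,t) = α(st,1) on the derived ideal
    intro s t z hz
    induction hz using Submodule.span_induction with
    | mem w hw =>
      obtain ⟨x, y, rfl⟩ := hw
      refine hext _ _ fun v => ?_
      rw [hα, hα]
      have h1 : t ⊗ₜ[F] ⁅x, y⁆ = ⁅(1 : S) ⊗ₜ[F] x, t ⊗ₜ[F] y⁆ := by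
        rw [LieAlgebra.ExtendScalars.bracket_tmul, one_mul]
      have h2 : (1 : S) ⊗ₜ[F] ⁅x, y⁆ = ⁅(1 : S) ⊗ₜ[F] x, (1 : S) ⊗ₜ[F] y⁆ := by
        rw [LieAlgebra.ExtendScalars.bracket_tmul, one_mul]
      rw [h1, h2, hinv, hinv, LieAlgebra.ExtendScalars.bracket_tmul,
        LieAlgebra.ExtendScalars.bracket_tmul, one_mul, mul_comm t s]
    | zero => simp
    | add u v _ _ hu hv => simp [map_add, hu, hv]
    | smul c u _ hu => simp [map_smul, hu]
  · -- intersection of kernels is trivial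
    have key : ∀ (u : S ⊗[F] g) (s : S) (y : g),
        Bbar u (s ⊗ₜ[F] y) = B (TensorProduct.lift (α s) u) y := by
      intro u s y
      induction u using TensorProduct.induction_on with
      | zero => simp
      | tmul t x => rw [TensorProduct.lift.tmul, hα]
      | add u v hu hv => simp [map_add, LinearMap.add_apply, hu, hv]
    rw [Submodule.eq_bot_iff]
    intro u hu
    simp only [Submodule.mem_iInf, LinearMap.mem_ker] at hu
    refine hnd u fun v => ?_
    induction v using TensorProduct.induction_on with
    | zero => simp
    | tmul s y => simp [key u s y, hu s]
    | add v w hv hw => simp [map_add, hv, hw]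
  · -- adjoint relation
    intro s t x y
    rw [hα, hsymm, ← hα, hBsymm]
  · -- formula for Bbar
    intro s t x y
    rw [hα]
end

section
/- Let (g,B) be a quadratic Lie algebra over an algebraically closed field of characteristic zero, with g indecomposable (g is not the direct sum of two non-zero orthogonal ideals). If T : g → g is a B-self-adjoint centroid of g, then T = γ·Id + N where γ is a scalar and N is a nilpotent B-self-adjoint centroid of g. -/
open Module Polynomial

/-- Over an algebraically closed field of characteristic zero, every `B`-self-adjoint
centroid of an indecomposable quadratic Lie algebra `(g,B)` is of the form
`γ·Id + N` with `γ` a scalar and `N` a nilpotent `B`-self-adjoint centroid. -/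
theorem selfadjoint_centroid_scalar_plus_nilpotent
    (F : Type*) [Field F] [IsAlgClosed F] [CharZero F]
    (g : Type*) [LieRing g] [LieAlgebra F g] [Module.Finite F g]
    (B : LinearMap.BilinForm F g)
    (hBsymm : ∀ x y : g, B x y = B y x)
    (hBnd : ∀ x : g, (∀ y : g, B x y = 0) → x = 0)
    (hBinv : ∀ x y z : g, B x ⁅y, z⁆ = B ⁅x, y⁆ z)
    (hind : ¬ ∃ I J : LieIdeal F g, I ≠ ⊥ ∧ J ≠ ⊥ ∧ IsCompl I J ∧
        ∀ x ∈ I, ∀ y ∈ J, B x y = 0)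
    (T : Module.End F g)
    (hTcent : ∀ x y : g, T ⁅x, y⁆ = ⁅T x, y⁆)
    (hTsa : ∀ x y : g, B (T x) y = B x (T y)) :
    ∃ (γ : F) (N : Module.End F g),
      T = γ • (1 : Module.End F g) + N ∧
      IsNilpotent N ∧
      (∀ x y : g, N ⁅x, y⁆ = ⁅N x, y⁆) ∧
      (∀ x y : g, B (N x) y = B x (N y)) := by
  classical
  have hfd : FiniteDimensional F g := ‹Module.Finite F g›
  -- the centroid property in the right slot
  have hTcent' : ∀ x y : g, T ⁅x, y⁆ = ⁅x, T y⁆ := by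
    intro x y
    have h1 : T ⁅x, y⁆ = -T ⁅y, x⁆ := by rw [← lie_skew y x, map_neg, neg_neg]
    rw [h1, hTcent y x, ← lie_skew x (T y)]
  -- powers of `T - μ • 1` satisfy the centroid property (right slot)
  have hScent : ∀ (μ : F) (k : ℕ) (x y : g),
      ((T - μ • 1) ^ k) ⁅x, y⁆ = ⁅x, ((T - μ • 1) ^ k) y⁆ := by
    intro μ k
    induction k with
    | zero => intro x y; simp
    | succ n ih =>
      intro x y
      have hstep : ∀ w : g, (T - μ • 1) ⁅x, w⁆ = ⁅x, (T - μ • 1) w⁆ := fun w => by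
        simp [LinearMap.sub_apply, hTcent' x w, lie_sub, lie_smul]
      rw [pow_succ', Module.End.mul_apply, ih x y, Module.End.mul_apply, hstep]
  -- powers of `T` are `B`-self-adjoint
  have hsaPow : ∀ (n : ℕ) (x y : g), B ((T ^ n) x) y = B x ((T ^ n) y) := by
    intro n
    induction n with
    | zero => intro x y; simp
    | succ n ih =>
      intro x y
      calc B ((T ^ (n + 1)) x) y = B ((T ^ n) (T x)) y := by
            rw [pow_succ, Module.End.mul_apply]
        _ = B (T x) ((T ^ n) y) := ih _ _
        _ = B x (T ((T ^ n) y)) := hTsa _ _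
        _ = B x ((T ^ (n + 1)) y) := by rw [pow_succ', Module.End.mul_apply]
  -- polynomials in `T` are `B`-self-adjoint
  have hsaAeval : ∀ (f : Polynomial F) (x y : g),
      B ((aeval T f) x) y = B x ((aeval T f) y) := by
    intro f
    induction f using Polynomial.induction_on' with
    | add p q hp hq =>
      intro x y
      simp [map_add, LinearMap.add_apply, hp, hq]
    | monomial n a =>
      intro x y
      have h1 : (aeval T (monomial n a)) = a • T ^ n := by
        rw [aeval_monomial, Algebra.algebraMap_eq_smul_one, smul_mul_assoc, one_mul]
      rw [h1, LinearMap.smul_apply, LinearMap.smul_apply, map_smul,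
        LinearMap.smul_apply, map_smul, hsaPow n x y]
  -- generalized eigenspaces for distinct eigenvalues are `B`-orthogonal
  have horth : ∀ (l n : F), l ≠ n → ∀ x ∈ T.maxGenEigenspace l,
      ∀ y ∈ T.maxGenEigenspace n, B x y = 0 := by
    intro l n hne x hx y hy
    rw [Module.End.mem_maxGenEigenspace] at hx hy
    obtain ⟨k, hk⟩ := hx
    obtain ⟨m, hm⟩ := hy
    have hcop : IsCoprime ((X - C l) ^ k) ((X - C n) ^ m) :=
      (isCoprime_X_sub_C_of_isUnit_sub (sub_ne_zero.mpr hne).isUnit).pow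
    obtain ⟨a, b, hab⟩ := hcop
    have hXk : aeval T ((X - C l) ^ k) = (T - l • 1) ^ k := by
      rw [map_pow, map_sub, aeval_X, aeval_C, Algebra.algebraMap_eq_smul_one]
    have hXm : aeval T ((X - C n) ^ m) = (T - n • 1) ^ m := by
      rw [map_pow, map_sub, aeval_X, aeval_C, Algebra.algebraMap_eq_smul_one]
    have h1 : y = (aeval T (a * (X - C l) ^ k)) y + (aeval T b) (((T - n • 1) ^ m) y) := by
      have h2 := congrArg (fun f : Module.End F g => f y) (congrArg (aeval T) hab)
      simpa [map_add, map_mul, map_one, hXm, LinearMap.add_apply, Module.End.mul_apply]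
        using h2.symm
    have h3 : (aeval T (a * (X - C l) ^ k)) x = 0 := by
      rw [map_mul, Module.End.mul_apply, hXk, hk, map_zero]
    rw [h1, hm, map_zero, add_zero, ← hsaAeval, h3]
    simp
  by_cases hγ : ∃ γ : F, T.maxGenEigenspace γ = ⊤
  · -- single generalized eigenvalue: `T - γ • 1` is nilpotent
    obtain ⟨γ, hγ⟩ := hγ
    refine ⟨γ, T - γ • 1, by abel, ?_, ?_, ?_⟩
    · refine ⟨finrank F g, ?_⟩
      ext x
      have hx : x ∈ T.maxGenEigenspace γ := hγ ▸ Submodule.mem_top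
      rw [Module.End.maxGenEigenspace_eq_genEigenspace_finrank,
        Module.End.mem_genEigenspace_nat, LinearMap.mem_ker] at hx
      simpa using hx
    · intro x y
      simp [LinearMap.sub_apply, hTcent x y, sub_lie, smul_lie]
    · intro x y
      simp only [LinearMap.sub_apply, LinearMap.smul_apply, Module.End.one_apply,
        map_sub, map_smul, LinearMap.sub_apply, LinearMap.smul_apply]
      rw [hTsa x y]
  · -- otherwise `g` decomposes, contradicting indecomposability
    exfalso
    push_neg at hγ
    have htop := Module.End.iSup_maxGenEigenspace_eq_top T
    have hindep := Module.End.independent_maxGenEigenspace T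
    have hex : ∃ l : F, T.maxGenEigenspace l ≠ ⊥ := by
      by_contra h
      push_neg at h
      refine hγ 0 ?_
      rw [h 0, ← htop, iSup_eq_bot.mpr h]
    obtain ⟨l, hl⟩ := hex
    set I' : Submodule F g := T.maxGenEigenspace l with hI'
    set J' : Submodule F g := ⨆ ν ≠ l, T.maxGenEigenspace ν with hJ'
    have hdisj : Disjoint I' J' := hindep l
    have hsup : I' ⊔ J' = ⊤ := by
      rw [← htop]
      refine le_antisymm (sup_le (le_iSup (fun μ => T.maxGenEigenspace μ) l) (iSup₂_le fun ν _ => le_iSup (fun μ => T.maxGenEigenspace μ) ν)) ?_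
      refine iSup_le fun μ => ?_
      rcases eq_or_ne μ l with h | h
      · exact h ▸ le_sup_left
      · exact le_sup_of_le_right
          (le_iSup₂ (f := fun ν (_ : ν ≠ l) => T.maxGenEigenspace ν) μ h)
    have hJbot : J' ≠ ⊥ := by
      intro h
      rw [h, sup_bot_eq] at hsup
      exact hγ l hsup
    -- generalized eigenspaces are Lie ideals
    have hIdealMax : ∀ (μ : F) (z m : g), m ∈ T.maxGenEigenspace μ →
        ⁅z, m⁆ ∈ T.maxGenEigenspace μ := by
      intro μ z m hm
      rw [Module.End.mem_maxGenEigenspace] at hm ⊢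
      obtain ⟨k, hk⟩ := hm
      exact ⟨k, by rw [hScent, hk, lie_zero]⟩
    have hIdealJ : ∀ (z m : g), m ∈ J' → ⁅z, m⁆ ∈ J' := by
      intro z m hm
      have hmap : Submodule.map (LieAlgebra.ad F g z) J' ≤ J' := by
        rw [hJ']
        simp only [Submodule.map_iSup]
        refine iSup₂_le fun ν hν => ?_
        refine le_trans ?_ (le_iSup₂ (f := fun ν (_ : ν ≠ l) => T.maxGenEigenspace ν) ν hν)
        rintro _ ⟨m', hm', rfl⟩
        simpa [LieAlgebra.ad_apply] using hIdealMax ν z m' hm'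
      have h2 : (LieAlgebra.ad F g z) m ∈ Submodule.map (LieAlgebra.ad F g z) J' :=
        Submodule.mem_map_of_mem hm
      simpa [LieAlgebra.ad_apply] using hmap h2
    let I : LieIdeal F g :=
      { I' with lie_mem := fun {x m} hm => hIdealMax l x m hm }
    let J : LieIdeal F g :=
      { J' with lie_mem := fun {x m} hm => hIdealJ x m hm }
    refine hind ⟨I, J, ?_, ?_, ?_, ?_⟩
    · intro h
      apply hl
      have h2 := congrArg (fun K : LieSubmodule F g g => (K : Submodule F g)) h
      simpa only [LieIdeal.toLieSubalgebra_toSubmodule, LieSubmodule.bot_toSubmodule] using h2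
    · intro h
      apply hJbot
      have h2 := congrArg (fun K : LieSubmodule F g g => (K : Submodule F g)) h
      simpa only [LieIdeal.toLieSubalgebra_toSubmodule, LieSubmodule.bot_toSubmodule] using h2
    · suffices h : IsCompl I' J' by
        simpa only [isCompl_iff, codisjoint_iff, disjoint_iff, ← LieSubmodule.toSubmodule_inj,
          LieSubmodule.sup_toSubmodule, LieSubmodule.inf_toSubmodule,
          LieSubmodule.top_toSubmodule, LieSubmodule.bot_toSubmodule] using h
      exact isCompl_iff.mpr ⟨hdisj, codisjoint_iff.mpr hsup⟩
    · intro x hx y hy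
      have hx' : x ∈ I' := hx
      have hy' : y ∈ J' := hy
      have hker : J' ≤ LinearMap.ker (B x) := by
        rw [hJ']
        refine iSup₂_le fun ν hν y' hy'2 => ?_
        simpa [LinearMap.mem_ker] using horth l ν (Ne.symm hν) x hx' y' hy'2
      simpa [LinearMap.mem_ker] using hker hy'
end

section
/- Let h_n(D) = F·D ⋉ h_n be the extension of the (2n+1)-dimensional Heisenberg Lie algebra h_n = V_n ⊕ F·ℏ by a derivation D with D(V_n) ⊆ V_n, D(ℏ)=0, φ = D|_{V_n} invertible, and ω(φ(x),y) = −ω(x,φ(y)). Then the bilinear form B defined by B(x,y) = ω(φ^{-1}(x),y) for x,y in V_n, B(x,D)=B(x,ℏ)=0 for x in V_n, B(D,D)=B(ℏ,ℏ)=0, B(D,ℏ)=1, is an invariant metric on h_n(D). -/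
/-- On the extended Heisenberg Lie algebra `h_n(D) = F·D ⊕ V ⊕ F·ℏ` (elements encoded
as triples `(a, x, b) = a·D + x + b·ℏ`), with bracket
`[aD+x+bℏ, a'D+x'+b'ℏ] = aD(x') − a'D(x) + ω(x,x')ℏ` (where `φ = D|_V`), the bilinear
form `B` with `B(x,y) = ω(φ⁻¹x, y)` on `V`, `B(D,ℏ) = 1`,
`B(D,D) = B(ℏ,ℏ) = 0` and `B(V,D) = B(V,ℏ) = 0` is an invariant metric. -/
theorem heisenberg_extension_metric
    (F : Type*) [Field F] [CharZero F]
    (V : Type*) [AddCommGroup V] [Module F V] [FiniteDimensional F V]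
    (ω : V →ₗ[F] V →ₗ[F] F)
    (hωalt : ∀ x : V, ω x x = 0)
    (hωnd : ∀ x : V, (∀ y : V, ω x y = 0) → x = 0)
    (φ : V ≃ₗ[F] V)
    (hφ : ∀ x y : V, ω (φ x) y = - ω x (φ y))
    (br : F × V × F → F × V × F → F × V × F)
    (hbr : ∀ p q, br p q = (0, p.1 • φ q.2.1 - q.1 • φ p.2.1, ω p.2.1 q.2.1))
    (B : F × V × F → F × V × F → F)
    (hB : ∀ p q, B p q = ω (φ.symm p.2.1) q.2.1 + p.1 * q.2.2 + q.1 * p.2.2) :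
    (∀ p q, B p q = B q p) ∧
    (∀ p, (∀ q, B p q = 0) → p = 0) ∧
    (∀ p q r, B (br p q) r = B p (br q r)) := by
  have hskew : ∀ x y : V, ω x y = - ω y x := by
    intro x y
    have h := hωalt (x + y)
    simp only [map_add, LinearMap.add_apply, hωalt] at h
    linear_combination h
  -- ω(φ⁻¹ x, φ y) = - ω x y
  have key : ∀ x y : V, ω (φ.symm x) (φ y) = - ω x y := by
    intro x y
    have := hφ (φ.symm x) y
    rw [φ.apply_symm_apply] at this
    linear_combination this
  -- symmetry of the V-part
  have hsymV : ∀ x y : V, ω (φ.symm x) y = ω (φ.symm y) x := by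
    intro x y
    have h1 := key x (φ.symm y)
    rw [φ.apply_symm_apply] at h1
    have h2 := hskew x (φ.symm y)
    linear_combination h1 - h2
  refine ⟨?_, ?_, ?_⟩
  · intro p q
    rw [hB, hB, hsymV]
    ring
  · rintro ⟨a, x, b⟩ h
    have hb : b = 0 := by have := h (1, 0, 0); simpa [hB] using this
    have ha : a = 0 := by have := h (0, 0, 1); simpa [hB] using this
    have hx : x = 0 := by
      have hx' : φ.symm x = 0 := by
        apply hωnd
        intro y
        have := h (0, y, 0)
        simpa [hB] using this
      have := congrArg φ hx'
      simpa using this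
    simp [ha, hb, hx]
  · intro p q r
    rw [hbr, hbr, hB, hB]
    simp only [map_sub, map_smul, LinearMap.sub_apply, LinearMap.smul_apply,
      smul_eq_mul, LinearEquiv.symm_apply_apply, key]
    ring
end

section
/- Let h_n(D) be the quadratic extension of the Heisenberg Lie algebra by an invertible derivation and S a commutative associative unital algebra. Given bilinear forms γ, ξ : S × S → F with γ non-degenerate, symmetric, and invariant, and ξ symmetric, the bilinear form B̄ on h_n(D)⊗S defined by B̄(x⊗s, y⊗t) = B(x,y)γ(s,t) for x,y in V_n, B̄(D⊗s, x⊗t) = B̄(ℏ⊗s, ℏ⊗t) = 0, B̄(D⊗s, ℏ⊗t) = γ(s,t), and B̄(D⊗s, D⊗t) = ξ(s,t) is an invariant metric on the current Lie algebra h_n(D)⊗S. -/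
open TensorProduct

/-- Contraction of the right tensor factor against a linear functional. -/
noncomputable def hcmContr (F S H : Type*) [Field F] [CommRing S] [Algebra F S]
    [AddCommGroup H] [Module F H] (f : H →ₗ[F] F) : (S ⊗[F] H) →ₗ[F] S :=
  TensorProduct.lift (((LinearMap.lsmul F S).comp f).flip)

@[simp] lemma hcmContr_tmul (F S H : Type*) [Field F] [CommRing S] [Algebra F S]
    [AddCommGroup H] [Module F H] (f : H →ₗ[F] F) (s : S) (p : H) :
    hcmContr F S H f (s ⊗ₜ[F] p) = f p • s := rfl

lemma hcmContr_add (F S H : Type*) [Field F] [CommRing S] [Algebra F S]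
    [AddCommGroup H] [Module F H] (f g : H →ₗ[F] F) (u : S ⊗[F] H) :
    hcmContr F S H (f + g) u = hcmContr F S H f u + hcmContr F S H g u := by
  induction u using TensorProduct.induction_on with
  | zero => simp
  | tmul s p => simp [add_smul]
  | add x y hx hy => simp only [map_add, hx, hy]; abel

lemma hcmContr_smul (F S H : Type*) [Field F] [CommRing S] [Algebra F S]
    [AddCommGroup H] [Module F H] (a : F) (f : H →ₗ[F] F) (u : S ⊗[F] H) :
    hcmContr F S H (a • f) u = a • hcmContr F S H f u := by
  induction u using TensorProduct.induction_on with
  | zero => simp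
  | tmul s p => simp [smul_smul]
  | add x y hx hy => simp only [map_add, hx, hy, smul_add]

/-- Representation of a tensor with respect to a basis on the right factor. -/
lemma hcmRepr (F S H : Type*) [Field F] [CommRing S] [Algebra F S]
    [AddCommGroup H] [Module F H] {ι : Type*} [Fintype ι] (b : Module.Basis ι F H)
    (u : S ⊗[F] H) : ∃ c : ι → S, u = ∑ i, c i ⊗ₜ[F] b i := by
  induction u using TensorProduct.induction_on with
  | zero => exact ⟨0, by simp⟩
  | tmul s p =>
    refine ⟨fun i => b.repr p i • s, ?_⟩
    have : ∀ i : ι, (b.repr p i • s) ⊗ₜ[F] b i = s ⊗ₜ[F] (b.repr p i • b i) := by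
      intro i; rw [smul_tmul]
    rw [Finset.sum_congr rfl (fun i _ => this i), ← tmul_sum, Module.Basis.sum_repr]
  | add x y hx hy =>
    obtain ⟨c, rfl⟩ := hx
    obtain ⟨d, rfl⟩ := hy
    exact ⟨c + d, by simp [add_tmul, Finset.sum_add_distrib]⟩

/-- If all contractions against functionals vanish, the tensor is zero. -/
lemma hcmContr_zero (F S H : Type*) [Field F] [CommRing S] [Algebra F S]
    [AddCommGroup H] [Module F H] [FiniteDimensional F H] (u : S ⊗[F] H)
    (h : ∀ f : H →ₗ[F] F, hcmContr F S H f u = 0) : u = 0 := by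
  set b := Module.finBasis F H
  obtain ⟨c, hc⟩ := hcmRepr F S H b u
  have hcz : ∀ j, c j = 0 := by
    intro j
    have hj := h (b.coord j)
    rw [hc, map_sum] at hj
    simpa [Module.Basis.coord_apply, Finsupp.single_apply, Finset.sum_ite_eq] using hj
  rw [hc]
  simp [hcz]


/-- Let `h_n(D) = F·D ⊕ V ⊕ F·ℏ` (triples `(a,x,b)`) be the extended Heisenberg Lie
algebra with its invariant metric `B`, and let `S` be a commutative associative unital
algebra. Given `γ` non-degenerate symmetric invariant and `ξ` symmetric bilinear forms
on `S`, the bilinear form `B̄` on the current Lie algebra `h_n(D) ⊗ S` defined by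
`B̄(x⊗s, y⊗t) = B(x,y)γ(s,t)` for `x,y ∈ V`, `B̄(D⊗s, x⊗t) = B̄(ℏ⊗s, ℏ⊗t) = 0`,
`B̄(D⊗s, ℏ⊗t) = γ(s,t)` and `B̄(D⊗s, D⊗t) = ξ(s,t)` (extended symmetrically, with
`B̄(ℏ⊗s, x⊗t) = 0`) is an invariant metric. -/
theorem heisenberg_current_metric
    (F : Type*) [Field F] [CharZero F]
    (V : Type*) [AddCommGroup V] [Module F V] [FiniteDimensional F V]
    (S : Type*) [CommRing S] [Algebra F S] [Module.Finite F S]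
    (ω : V →ₗ[F] V →ₗ[F] F)
    (hωalt : ∀ x : V, ω x x = 0)
    (hωnd : ∀ x : V, (∀ y : V, ω x y = 0) → x = 0)
    (φ : V ≃ₗ[F] V)
    (hφ : ∀ x y : V, ω (φ x) y = - ω x (φ y))
    (γ : S →ₗ[F] S →ₗ[F] F)
    (hγsymm : ∀ s t : S, γ s t = γ t s)
    (hγnd : ∀ s : S, (∀ t : S, γ s t = 0) → s = 0)
    (hγinv : ∀ s t u : S, γ (s * t) u = γ s (t * u))
    (ξ : S →ₗ[F] S →ₗ[F] F)
    (hξsymm : ∀ s t : S, ξ s t = ξ t s)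
    (brT : (S ⊗[F] (F × V × F)) →ₗ[F] (S ⊗[F] (F × V × F)) →ₗ[F] (S ⊗[F] (F × V × F)))
    (hbrT : ∀ (s t : S) (p q : F × V × F),
      brT (s ⊗ₜ[F] p) (t ⊗ₜ[F] q)
        = (s * t) ⊗ₜ[F] ((0, p.1 • φ q.2.1 - q.1 • φ p.2.1, ω p.2.1 q.2.1) : F × V × F))
    (Bbar : LinearMap.BilinForm F (S ⊗[F] (F × V × F)))
    (hBbarsymm : ∀ u v, Bbar u v = Bbar v u)
    (h1 : ∀ (s t : S) (x y : V),
      Bbar (s ⊗ₜ[F] ((0, x, 0) : F × V × F)) (t ⊗ₜ[F] ((0, y, 0) : F × V × F))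
        = ω (φ.symm x) y * γ s t)
    (h2 : ∀ (s t : S) (x : V),
      Bbar (s ⊗ₜ[F] ((1, 0, 0) : F × V × F)) (t ⊗ₜ[F] ((0, x, 0) : F × V × F)) = 0)
    (h3 : ∀ s t : S,
      Bbar (s ⊗ₜ[F] ((0, 0, 1) : F × V × F)) (t ⊗ₜ[F] ((0, 0, 1) : F × V × F)) = 0)
    (h4 : ∀ s t : S,
      Bbar (s ⊗ₜ[F] ((1, 0, 0) : F × V × F)) (t ⊗ₜ[F] ((0, 0, 1) : F × V × F)) = γ s t)
    (h5 : ∀ s t : S,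
      Bbar (s ⊗ₜ[F] ((1, 0, 0) : F × V × F)) (t ⊗ₜ[F] ((1, 0, 0) : F × V × F)) = ξ s t)
    (h6 : ∀ (s t : S) (x : V),
      Bbar (s ⊗ₜ[F] ((0, 0, 1) : F × V × F)) (t ⊗ₜ[F] ((0, x, 0) : F × V × F)) = 0) :
    (∀ u v, Bbar u v = Bbar v u) ∧
    (∀ u, (∀ v, Bbar u v = 0) → u = 0) ∧
    (∀ u v w, Bbar (brT u v) w = Bbar u (brT v w)) := by
  -- skew-symmetry of ω
  have hskew : ∀ x y : V, ω x y = - ω y x := by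
    intro x y
    have h := hωalt (x + y)
    simp only [map_add, LinearMap.add_apply, hωalt] at h
    linear_combination h
  -- key identity
  have key1 : ∀ x y : V, ω (φ.symm x) (φ y) = - ω x y := by
    intro x y
    have h := hφ (φ.symm x) y
    rw [LinearEquiv.apply_symm_apply] at h
    linear_combination h
  -- decomposition of a triple
  have pdecomp : ∀ p : F × V × F,
      p = p.1 • ((1, 0, 0) : F × V × F) + ((0, p.2.1, 0) : F × V × F)
        + p.2.2 • ((0, 0, 1) : F × V × F) := by
    intro p
    refine Prod.ext ?_ (Prod.ext ?_ ?_) <;> simp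
  -- symmetric versions of hypotheses
  have h2' : ∀ (s t : S) (x : V),
      Bbar (s ⊗ₜ[F] ((0, x, 0) : F × V × F)) (t ⊗ₜ[F] ((1, 0, 0) : F × V × F)) = 0 := by
    intro s t x; rw [hBbarsymm]; exact h2 t s x
  have h4' : ∀ s t : S,
      Bbar (s ⊗ₜ[F] ((0, 0, 1) : F × V × F)) (t ⊗ₜ[F] ((1, 0, 0) : F × V × F)) = γ s t := by
    intro s t; rw [hBbarsymm, h4, hγsymm]
  have h6' : ∀ (s t : S) (x : V),
      Bbar (s ⊗ₜ[F] ((0, x, 0) : F × V × F)) (t ⊗ₜ[F] ((0, 0, 1) : F × V × F)) = 0 := by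
    intro s t x; rw [hBbarsymm]; exact h6 t s x
  -- the general formula on pure tensors
  have Bform : ∀ (s t : S) (p q : F × V × F),
      Bbar (s ⊗ₜ[F] p) (t ⊗ₜ[F] q)
        = (p.1 * q.1) * ξ s t + (p.1 * q.2.2 + q.1 * p.2.2) * γ s t
          + ω (φ.symm p.2.1) q.2.1 * γ s t := by
    intro s t p q
    conv_lhs => rw [pdecomp p, pdecomp q]
    simp only [tmul_add, tmul_smul, map_add, map_smul, LinearMap.add_apply,
      LinearMap.smul_apply, h1, h2, h3, h4, h5, h6, h2', h4', h6', smul_eq_mul,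
      smul_zero, mul_zero, add_zero, zero_add]
    ring
  refine ⟨hBbarsymm, ?_, ?_⟩
  · -- nondegeneracy
    intro u hu
    -- B(x,y) = ω(φ⁻¹ x, y) as a bilinear form
    set B : V →ₗ[F] V →ₗ[F] F := ω ∘ₗ (φ.symm : V ≃ₗ[F] V).toLinearMap with hB
    have hBapp : ∀ x y : V, B x y = ω (φ.symm x) y := fun x y => rfl
    have hBnd : (LinearMap.BilinForm.Nondegenerate (B.flip)) := by
      refine LinearMap.BilinForm.Nondegenerate.ofSeparatingLeft (fun y hy => ?_)
      refine hωnd y (fun z => ?_)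
      have hz := hy (φ z)
      rw [LinearMap.flip_apply, hBapp, LinearEquiv.symm_apply_apply] at hz
      rw [hskew, hz, neg_zero]
    have hsurj : ∀ f : Module.Dual F V, ∃ y : V, ∀ x : V, B x y = f x := by
      intro f
      obtain ⟨y, hy⟩ := (LinearMap.BilinForm.toDual (B.flip) hBnd).surjective f
      exact ⟨y, fun x => by rw [← hy]; rfl⟩
    -- projections
    set πD : (F × V × F) →ₗ[F] F := LinearMap.fst F F (V × F) with hπD
    set πh : (F × V × F) →ₗ[F] F :=
      (LinearMap.snd F V F) ∘ₗ (LinearMap.snd F F (V × F)) with hπh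
    set πV : (F × V × F) →ₗ[F] V :=
      (LinearMap.fst F V F) ∘ₗ (LinearMap.snd F F (V × F)) with hπV
    -- step (a): contraction against D-component
    have ha : ∀ (u : S ⊗[F] (F × V × F)) (t : S),
        Bbar u (t ⊗ₜ[F] ((0, 0, 1) : F × V × F))
          = γ (hcmContr F S (F × V × F) πD u) t := by
      intro u t
      induction u using TensorProduct.induction_on with
      | zero => simp
      | tmul s p => rw [Bform]; simp [hπD]
      | add x y hx hy => simp only [map_add, LinearMap.add_apply, hx, hy]
    have hb : ∀ (u : S ⊗[F] (F × V × F)) (t : S),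
        Bbar u (t ⊗ₜ[F] ((1, 0, 0) : F × V × F))
          = ξ (hcmContr F S (F × V × F) πD u) t
            + γ (hcmContr F S (F × V × F) πh u) t := by
      intro u t
      induction u using TensorProduct.induction_on with
      | zero => simp
      | tmul s p => rw [Bform]; simp [hπD, hπh]; try ring
      | add x y hx hy => simp only [map_add, LinearMap.add_apply, hx, hy]; ring
    have hc : ∀ (u : S ⊗[F] (F × V × F)) (y : V) (t : S),
        Bbar u (t ⊗ₜ[F] ((0, y, 0) : F × V × F))
          = γ (hcmContr F S (F × V × F) ((B.flip y) ∘ₗ πV) u) t := by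
      intro u y t
      induction u using TensorProduct.induction_on with
      | zero => simp
      | tmul s p =>
        rw [Bform]
        simp [hπV, hBapp]
      | add x y hx hy => simp only [map_add, LinearMap.add_apply, hx, hy]
    have hD : hcmContr F S (F × V × F) πD u = 0 := by
      refine hγnd _ (fun t => ?_)
      rw [← ha u t]; exact hu _
    have hH : hcmContr F S (F × V × F) πh u = 0 := by
      refine hγnd _ (fun t => ?_)
      have := hb u t
      rw [hu, hD] at this
      simpa using this.symm
    have hV : ∀ y : V, hcmContr F S (F × V × F) ((B.flip y) ∘ₗ πV) u = 0 := by
      intro y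
      refine hγnd _ (fun t => ?_)
      rw [← hc u y t]; exact hu _
    -- all contractions vanish
    have hall : ∀ f : (F × V × F) →ₗ[F] F, hcmContr F S (F × V × F) f u = 0 := by
      intro f
      obtain ⟨y, hy⟩ := hsurj (f ∘ₗ ((LinearMap.inr F F (V × F)) ∘ₗ (LinearMap.inl F V F)))
      have hfeq : f = f ((1, 0, 0) : F × V × F) • πD + (B.flip y) ∘ₗ πV
          + f ((0, 0, 1) : F × V × F) • πh := by
        apply LinearMap.ext
        intro p
        conv_lhs => rw [pdecomp p]
        have := hy p.2.1
        simp only [LinearMap.comp_apply, LinearMap.inl_apply, LinearMap.inr_apply] at this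
        simp only [map_add, map_smul, LinearMap.add_apply, LinearMap.smul_apply,
          LinearMap.comp_apply, hπD, hπh, hπV, LinearMap.fst_apply, LinearMap.snd_apply,
          smul_eq_mul, LinearMap.flip_apply]
        rw [hBapp] at this
        rw [hBapp, this]
        ring
      rw [hfeq, hcmContr_add, hcmContr_add, hcmContr_smul, hcmContr_smul, hD, hH, hV]
      simp
    exact hcmContr_zero F S (F × V × F) u hall
  · -- invariance
    intro u v w
    induction u using TensorProduct.induction_on with
    | zero => simp
    | add x y hx hy => simp only [map_add, LinearMap.add_apply, hx, hy]
    | tmul s p =>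
      induction v using TensorProduct.induction_on with
      | zero => simp
      | add x y hx hy => simp only [map_add, LinearMap.add_apply, hx, hy]
      | tmul t q =>
        induction w using TensorProduct.induction_on with
        | zero => simp
        | add x y hx hy => simp only [map_add, LinearMap.add_apply, hx, hy]
        | tmul r m =>
          rw [hbrT, hbrT, Bform, Bform]
          simp only [map_sub, map_smul, LinearMap.sub_apply, LinearMap.smul_apply,
            LinearEquiv.symm_apply_apply, key1, smul_eq_mul, hγinv]
          ring
end

section
/- Let (h, B_h) be a quadratic Lie algebra and D a B_h-skew-symmetric derivation of h. On g = F·d ⊕ h ⊕ F·c, the double extension bracket [x,y]_g = [x,y]_h + B_h(D(x),y)c, [d,x]_g = D(x), [c, g]_g = 0 (x,y ∈ h) defines a Lie algebra, and the bilinear form B extending B_h with B(d,c)=1, B(d,d)=B(c,c)=0, B(d,h)=B(c,h)=0 is an invariant metric on g. -/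
set_option maxHeartbeats 1600000 in
theorem double_extension_quadratic_aux
    (F : Type*) [Field F] [CharZero F]
    (h : Type*) [LieRing h] [LieAlgebra F h] [Module.Finite F h]
    (Bh : LinearMap.BilinForm F h)
    (hBsymm : ∀ x y : h, Bh x y = Bh y x)
    (hBnd : ∀ x : h, (∀ y : h, Bh x y = 0) → x = 0)
    (hBinv : ∀ x y z : h, Bh x ⁅y, z⁆ = Bh ⁅x, y⁆ z)
    (D : h →ₗ[F] h)
    (hder : ∀ x y : h, D ⁅x, y⁆ = ⁅D x, y⁆ + ⁅x, D y⁆)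
    (hskew : ∀ x y : h, Bh (D x) y = - Bh x (D y))
    (br : F × h × F → F × h × F → F × h × F)
    (hbr : ∀ p q, br p q
      = (0, ⁅p.2.1, q.2.1⁆ + p.1 • D q.2.1 - q.1 • D p.2.1, Bh (D p.2.1) q.2.1))
    (B : F × h × F → F × h × F → F)
    (hB : ∀ p q, B p q = Bh p.2.1 q.2.1 + p.1 * q.2.2 + q.1 * p.2.2) :
    (∀ p, br p p = 0) ∧
    (∀ p q r, br p (br q r) = br (br p q) r + br q (br p r)) ∧
    (∀ p q, B p q = B q p) ∧
    (∀ p, (∀ q, B p q = 0) → p = 0) ∧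
    (∀ p q r, B (br p q) r = B p (br q r)) := by
  have hDD : ∀ x y : h, Bh (D (D x)) y = - Bh (D x) (D y) := fun x y => hskew (D x) y
  have hself : ∀ x : h, Bh (D x) x = 0 := by
    intro x
    have h1 := hskew x x
    have h2 := hBsymm (D x) x
    linear_combination (h1 + h2) / 2
  refine ⟨?_, ?_, ?_, ?_, ?_⟩
  · rintro ⟨a, x, b⟩
    simp [hbr, hself, Prod.ext_iff]
  · rintro ⟨a, x, α⟩ ⟨b, y, β⟩ ⟨c, z, γ⟩
    simp only [hbr, Prod.mk.injEq, Prod.mk_add_mk]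
    refine ⟨by ring, ?_, ?_⟩
    · simp only [map_add, map_sub, map_smul, hder, lie_add, add_lie, lie_sub, sub_lie,
        lie_smul, smul_lie, smul_add, smul_sub, zero_smul, smul_zero, sub_zero, zero_sub,
        lie_lie]
      rw [← lie_skew y (D x)]
      module
    · simp only [map_add, map_sub, map_smul, LinearMap.add_apply, LinearMap.sub_apply,
        LinearMap.smul_apply, smul_eq_mul, hder, lie_add, add_lie, map_zero]
      have e3 : Bh ⁅D y, x⁆ z = - Bh ⁅x, D y⁆ z := by
        rw [← lie_skew (D y) x, map_neg, LinearMap.neg_apply]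
      have e6 : Bh (D y) (D x) = Bh (D x) (D y) := by
        linear_combination hskew y (D x) - hBsymm y (D (D x)) - hDD x y
      linear_combination hBinv (D x) y z - hBinv (D y) x z - e3 + b * hDD x z
        - a * hDD y z + c * e6
  · rintro ⟨a, x, α⟩ ⟨b, y, β⟩
    simp only [hB]
    rw [hBsymm]; ring
  · rintro ⟨a, x, α⟩ hp
    have h1 := hp (0, 0, 1)
    have h2 := hp (1, 0, 0)
    simp only [hB] at h1 h2
    simp at h1 h2
    have h3 : x = 0 := by
      apply hBnd
      intro y
      have := hp (0, y, 0)
      simp only [hB] at this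
      simpa using this
    refine Prod.ext ?_ (Prod.ext ?_ ?_) <;> simp [h1, h2, h3]
  · rintro ⟨a, x, α⟩ ⟨b, y, β⟩ ⟨c, z, γ⟩
    simp only [hbr, hB, map_add, map_sub, map_smul, LinearMap.add_apply, LinearMap.sub_apply,
      LinearMap.smul_apply, smul_eq_mul]
    linear_combination -hBinv x y z - b * hskew x z + c * hskew x y

/-- Double extension (Medina–Revoy): given a quadratic Lie algebra `(h, B_h)` and a
`B_h`-skew-symmetric derivation `D`, the space `g = F·d ⊕ h ⊕ F·c` (triples
`(a, x, b) = a·d + x + b·c`) with bracket `[x,y] = [x,y]_h + B_h(Dx,y)c`,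
`[d,x] = D(x)`, `c` central, is a Lie algebra, and the form `B` extending `B_h` with
`B(d,c) = 1`, `B(d,d) = B(c,c) = 0`, `B(d,h) = B(c,h) = 0` is an invariant metric. -/
theorem double_extension_quadratic
    (F : Type*) [Field F] [CharZero F]
    (h : Type*) [LieRing h] [LieAlgebra F h] [Module.Finite F h]
    (Bh : LinearMap.BilinForm F h)
    (hBsymm : ∀ x y : h, Bh x y = Bh y x)
    (hBnd : ∀ x : h, (∀ y : h, Bh x y = 0) → x = 0)
    (hBinv : ∀ x y z : h, Bh x ⁅y, z⁆ = Bh ⁅x, y⁆ z)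
    (D : h →ₗ[F] h)
    (hder : ∀ x y : h, D ⁅x, y⁆ = ⁅D x, y⁆ + ⁅x, D y⁆)
    (hskew : ∀ x y : h, Bh (D x) y = - Bh x (D y))
    (br : F × h × F → F × h × F → F × h × F)
    (hbr : ∀ p q, br p q
      = (0, ⁅p.2.1, q.2.1⁆ + p.1 • D q.2.1 - q.1 • D p.2.1, Bh (D p.2.1) q.2.1))
    (B : F × h × F → F × h × F → F)
    (hB : ∀ p q, B p q = Bh p.2.1 q.2.1 + p.1 * q.2.2 + q.1 * p.2.2) :
    (∀ p, br p p = 0) ∧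
    (∀ p q r, br p (br q r) = br (br p q) r + br q (br p r)) ∧
    (∀ p q, B p q = B q p) ∧
    (∀ p, (∀ q, B p q = 0) → p = 0) ∧
    (∀ p q r, B (br p q) r = B p (br q r)) :=
  double_extension_quadratic_aux F h Bh hBsymm hBnd hBinv D hder hskew br hbr B hB
end

section
/- Let (h, B_h) be a quadratic Lie algebra, D a B_h-skew-symmetric derivation, and h(D) = F·d ⊕ h ⊕ F·c the double extension. Let S be a commutative associative unital algebra with a non-degenerate symmetric invariant bilinear form γ'. Suppose h⊗S admits an invariant metric with associated bilinear map α_h : S × S → Γ(h) (so B̄_h(x⊗s,y⊗t) = B_h(α_h(t,s)(x),y)), and suppose α_h(s,t)∘D = D∘α_h(s,t) = γ'(s,t)·D for all s,t. Let f : S × S → C(h) ∩ Ker(D) be bilinear and ζ : S × S → F symmetric bilinear. Then the bilinear form B̄ on h(D)⊗S given by B̄(d⊗s, c⊗t) = γ'(s,t), B̄(x⊗s, y⊗t) = B_h(α_h(t,s)(x), y), B̄(d⊗s, d⊗t) = ζ(s,t), B̄(c⊗s, c⊗t) = 0, B̄(c⊗s, x⊗t) = 0, and B̄(d⊗s, x⊗t)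 = B_h(f(t,s), x) for x,y in h, is an invariant metric on the current Lie algebra h(D)⊗S. -/
open TensorProduct

/-- Double extension theorem for quadratic current Lie algebras: with
`h(D) = F·d ⊕ h ⊕ F·c` (triples `(a,x,b)`) the double extension of `(h, B_h)` by a
`B_h`-skew-symmetric derivation `D`, if `S` carries a non-degenerate symmetric
invariant form `γ'`, the current algebra `h ⊗ S` has an invariant metric with
associated centroid-valued map `α_h` (satisfying conditions (i)–(iii)), and
`α_h(s,t)∘D = D∘α_h(s,t) = γ'(s,t)·D`, then for any bilinear
`f : S×S → C(h) ∩ Ker D` and symmetric bilinear `ζ`, the form `B̄` on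
`h(D) ⊗ S` given by the listed assignments is an invariant metric. -/
theorem double_extension_current_metric
    (F : Type*) [Field F] [CharZero F]
    (h : Type*) [LieRing h] [LieAlgebra F h] [Module.Finite F h]
    (S : Type*) [CommRing S] [Algebra F S] [Module.Finite F S]
    (Bh : LinearMap.BilinForm F h)
    (hBsymm : ∀ x y : h, Bh x y = Bh y x)
    (hBnd : ∀ x : h, (∀ y : h, Bh x y = 0) → x = 0)
    (hBinv : ∀ x y z : h, Bh x ⁅y, z⁆ = Bh ⁅x, y⁆ z)
    (D : h →ₗ[F] h)
    (hder : ∀ x y : h, D ⁅x, y⁆ = ⁅D x, y⁆ + ⁅x, D y⁆)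
    (hskew : ∀ x y : h, Bh (D x) y = - Bh x (D y))
    (γ' : S →ₗ[F] S →ₗ[F] F)
    (hγsymm : ∀ s t : S, γ' s t = γ' t s)
    (hγnd : ∀ s : S, (∀ t : S, γ' s t = 0) → s = 0)
    (hγinv : ∀ s t u : S, γ' (s * t) u = γ' s (t * u))
    (αh : S →ₗ[F] S →ₗ[F] (h →ₗ[F] h))
    (hαcent : ∀ (s t : S) (x y : h), αh s t ⁅x, y⁆ = ⁅αh s t x, y⁆)
    (hα1 : ∀ s t : S, ∀ z ∈ Submodule.span F {w : h | ∃ x y : h, ⁅x, y⁆ = w},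
      αh s t z = αh (s * t) 1 z)
    (hα2 : ⨅ s : S, LinearMap.ker (TensorProduct.lift (αh s)) = (⊥ : Submodule F (S ⊗[F] h)))
    (hα3 : ∀ (s t : S) (x y : h), Bh (αh s t x) y = Bh x (αh t s y))
    (hαD : ∀ (s t : S) (x : h),
      αh s t (D x) = γ' s t • D x ∧ D (αh s t x) = γ' s t • D x)
    (f : S →ₗ[F] S →ₗ[F] h)
    (hf : ∀ s t : S, f s t ∈ LieAlgebra.center F h ∧ D (f s t) = 0)
    (ζ : S →ₗ[F] S →ₗ[F] F)
    (hζsymm : ∀ s t : S, ζ s t = ζ t s)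
    (brT : (S ⊗[F] (F × h × F)) →ₗ[F] (S ⊗[F] (F × h × F)) →ₗ[F] (S ⊗[F] (F × h × F)))
    (hbrT : ∀ (s t : S) (p q : F × h × F),
      brT (s ⊗ₜ[F] p) (t ⊗ₜ[F] q)
        = (s * t) ⊗ₜ[F]
          ((0, ⁅p.2.1, q.2.1⁆ + p.1 • D q.2.1 - q.1 • D p.2.1, Bh (D p.2.1) q.2.1) :
            F × h × F))
    (Bbar : LinearMap.BilinForm F (S ⊗[F] (F × h × F)))
    (hBbarsymm : ∀ u v, Bbar u v = Bbar v u)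
    (h1 : ∀ s t : S,
      Bbar (s ⊗ₜ[F] ((1, 0, 0) : F × h × F)) (t ⊗ₜ[F] ((0, 0, 1) : F × h × F)) = γ' s t)
    (h2 : ∀ (s t : S) (x y : h),
      Bbar (s ⊗ₜ[F] ((0, x, 0) : F × h × F)) (t ⊗ₜ[F] ((0, y, 0) : F × h × F))
        = Bh (αh t s x) y)
    (h3 : ∀ s t : S,
      Bbar (s ⊗ₜ[F] ((1, 0, 0) : F × h × F)) (t ⊗ₜ[F] ((1, 0, 0) : F × h × F)) = ζ s t)
    (h4 : ∀ s t : S,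
      Bbar (s ⊗ₜ[F] ((0, 0, 1) : F × h × F)) (t ⊗ₜ[F] ((0, 0, 1) : F × h × F)) = 0)
    (h5 : ∀ (s t : S) (x : h),
      Bbar (s ⊗ₜ[F] ((0, 0, 1) : F × h × F)) (t ⊗ₜ[F] ((0, x, 0) : F × h × F)) = 0)
    (h6 : ∀ (s t : S) (x : h),
      Bbar (s ⊗ₜ[F] ((1, 0, 0) : F × h × F)) (t ⊗ₜ[F] ((0, x, 0) : F × h × F))
        = Bh (f t s) x) :
    (∀ u v, Bbar u v = Bbar v u) ∧
    (∀ u, (∀ v, Bbar u v = 0) → u = 0) ∧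
    (∀ u v w, Bbar (brT u v) w = Bbar u (brT v w)) := by

  -- symmetric variants of the pairing axioms
  have h1' : ∀ s t : S,
      Bbar (s ⊗ₜ[F] ((0, 0, 1) : F × h × F)) (t ⊗ₜ[F] ((1, 0, 0) : F × h × F)) = γ' s t := by
    intro s t; rw [hBbarsymm, h1, hγsymm]
  have h5' : ∀ (s t : S) (x : h),
      Bbar (s ⊗ₜ[F] ((0, x, 0) : F × h × F)) (t ⊗ₜ[F] ((0, 0, 1) : F × h × F)) = 0 := by
    intro s t x; rw [hBbarsymm, h5]
  have h6' : ∀ (s t : S) (x : h),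
      Bbar (s ⊗ₜ[F] ((0, x, 0) : F × h × F)) (t ⊗ₜ[F] ((1, 0, 0) : F × h × F))
        = Bh (f s t) x := by
    intro s t x; rw [hBbarsymm, h6]
  -- decomposition of a pure tensor into the three components
  have tdec : ∀ (s : S) (p : F × h × F),
      s ⊗ₜ[F] p
        = (p.1 • s) ⊗ₜ[F] ((1, 0, 0) : F × h × F)
          + s ⊗ₜ[F] ((0, p.2.1, 0) : F × h × F)
          + (p.2.2 • s) ⊗ₜ[F] ((0, 0, 1) : F × h × F) := by
    rintro s ⟨a, x, b⟩
    have hp : ((a, x, b) : F × h × F)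
        = a • ((1, 0, 0) : F × h × F) + ((0, x, 0) : F × h × F)
          + b • ((0, 0, 1) : F × h × F) := by
      simp [Prod.ext_iff]
    conv_lhs => rw [hp]
    rw [tmul_add, tmul_add, tmul_smul, tmul_smul, smul_tmul', smul_tmul']
  -- master formula for Bbar on pure tensors
  have Bform : ∀ (s t : S) (p q : F × h × F),
      Bbar (s ⊗ₜ[F] p) (t ⊗ₜ[F] q)
        = p.1 * q.1 * ζ s t + p.1 * q.2.2 * γ' s t + q.1 * p.2.2 * γ' s t
          + Bh (αh t s p.2.1) q.2.1 + p.1 * Bh (f t s) q.2.1 + q.1 * Bh (f s t) p.2.1 := by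
    intro s t p q
    rw [tdec s p, tdec t q]
    simp only [map_add, LinearMap.add_apply, h1, h2, h3, h4, h5, h6, h1', h5', h6',
      map_smul, LinearMap.smul_apply, smul_eq_mul]
    ring
  -- the middle embedding
  set e2 : h →ₗ[F] (F × h × F) :=
    (LinearMap.inr F F (h × F)).comp (LinearMap.inl F h F) with he2
  set E : (S ⊗[F] h) →ₗ[F] (S ⊗[F] (F × h × F)) :=
    TensorProduct.map LinearMap.id e2 with hE
  have hEtmul : ∀ (s : S) (x : h), E (s ⊗ₜ[F] x) = s ⊗ₜ[F] ((0, x, 0) : F × h × F) := by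
    intro s x; simp [hE, he2]
  have existsDec : ∀ u : S ⊗[F] (F × h × F), ∃ (sd sc : S) (w : S ⊗[F] h),
      u = sd ⊗ₜ[F] ((1, 0, 0) : F × h × F) + E w + sc ⊗ₜ[F] ((0, 0, 1) : F × h × F) := by
    intro u
    induction u using TensorProduct.induction_on with
    | zero => exact ⟨0, 0, 0, by simp⟩
    | tmul s p =>
      exact ⟨p.1 • s, p.2.2 • s, s ⊗ₜ[F] p.2.1, by rw [tdec s p, hEtmul]⟩
    | add u1 u2 ih1 ih2 =>
      obtain ⟨sd1, sc1, w1, rfl⟩ := ih1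
      obtain ⟨sd2, sc2, w2, rfl⟩ := ih2
      refine ⟨sd1 + sd2, sc1 + sc2, w1 + w2, ?_⟩
      rw [add_tmul, add_tmul, map_add]
      abel
  have EmidC : ∀ (w : S ⊗[F] h) (t : S),
      Bbar (E w) (t ⊗ₜ[F] ((0, 0, 1) : F × h × F)) = 0 := by
    intro w t
    induction w using TensorProduct.induction_on with
    | zero => simp
    | tmul s x => rw [hEtmul]; exact h5' s t x
    | add w1 w2 ih1 ih2 => simp [map_add, ih1, ih2]
  have EmidM : ∀ (w : S ⊗[F] h) (t : S) (y : h),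
      Bbar (E w) (t ⊗ₜ[F] ((0, y, 0) : F × h × F))
        = Bh (TensorProduct.lift (αh t) w) y := by
    intro w t y
    induction w using TensorProduct.induction_on with
    | zero => simp
    | tmul s x => rw [hEtmul, h2]; simp
    | add w1 w2 ih1 ih2 => simp [map_add, ih1, ih2]
  -- non-degeneracy
  have nondeg : ∀ u, (∀ v, Bbar u v = 0) → u = 0 := by
    intro u hu
    obtain ⟨sd, sc, w, rfl⟩ := existsDec u
    have hsd : sd = 0 := by
      refine hγnd sd fun t => ?_
      have := hu (t ⊗ₜ[F] ((0, 0, 1) : F × h × F))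
      rwa [map_add, map_add, LinearMap.add_apply, LinearMap.add_apply, h1, EmidC, h4,
        add_zero, add_zero] at this
    subst hsd
    rw [zero_tmul, zero_add] at hu ⊢
    have hw : w = 0 := by
      have hmem : w ∈ ⨅ s : S, LinearMap.ker (TensorProduct.lift (αh s)) := by
        refine Submodule.mem_iInf _ |>.mpr fun t => LinearMap.mem_ker.mpr ?_
        refine hBnd _ fun y => ?_
        have := hu (t ⊗ₜ[F] ((0, y, 0) : F × h × F))
        rwa [map_add, LinearMap.add_apply, EmidM, h5, add_zero] at this
      rw [hα2] at hmem
      simpa using hmem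
    subst hw
    rw [map_zero, zero_add] at hu ⊢
    have hsc : sc = 0 := by
      refine hγnd sc fun t => ?_
      have := hu (t ⊗ₜ[F] ((1, 0, 0) : F × h × F))
      rwa [h1'] at this
    rw [hsc, zero_tmul]
  -- helper facts for invariance
  have hαD1 : ∀ (s t : S) (x : h), αh s t (D x) = γ' s t • D x := fun s t x => (hαD s t x).1
  have finvD : ∀ (s t : S) (x : h), Bh (f s t) (D x) = 0 := by
    intro s t x
    have hs := hskew (f s t) x
    rw [(hf s t).2, map_zero, LinearMap.zero_apply] at hs
    exact neg_eq_zero.mp hs.symm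
  have finvBr : ∀ (s t : S) (x y : h), Bh (f s t) ⁅x, y⁆ = 0 := by
    intro s t x y
    rw [hBinv]
    have hc : ⁅f s t, x⁆ = (0 : h) := by
      have hm := (LieModule.mem_maxTrivSubmodule F h h (f s t)).mp (hf s t).1
      rw [← lie_skew, hm x, neg_zero]
    rw [hc, map_zero, LinearMap.zero_apply]
  have γkey : ∀ s t u : S, γ' u (s * t) = γ' s (t * u) := by
    intro s t u; rw [hγsymm, hγinv]
  have spanmem : ∀ y z : h,
      ⁅y, z⁆ ∈ Submodule.span F {w : h | ∃ x y : h, ⁅x, y⁆ = w} :=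
    fun y z => Submodule.subset_span ⟨y, z, rfl⟩
  have keyMain : ∀ (s t u : S) (x y z : h),
      Bh (αh u (s * t) ⁅x, y⁆) z = Bh (αh (t * u) s x) ⁅y, z⁆ := by
    intro s t u x y z
    rw [hαcent, ← hBinv, hα3, hα3, hα1 (s * t) u _ (spanmem y z),
      hα1 s (t * u) _ (spanmem y z), mul_assoc]
  -- invariance on pure tensors
  have keyInv : ∀ (s t u : S) (p q r : F × h × F),
      Bbar (brT (s ⊗ₜ[F] p) (t ⊗ₜ[F] q)) (u ⊗ₜ[F] r)
        = Bbar (s ⊗ₜ[F] p) (brT (t ⊗ₜ[F] q) (u ⊗ₜ[F] r)) := by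
    rintro s t u ⟨a, x, b⟩ ⟨a', y, b'⟩ ⟨a'', z, b''⟩
    rw [hbrT, hbrT, Bform, Bform]
    simp only [map_add, map_sub, map_smul, LinearMap.add_apply, LinearMap.sub_apply,
      LinearMap.smul_apply, smul_eq_mul, hαD1, finvD, finvBr]
    rw [keyMain s t u x y z]
    have g1 : γ' u (s * t) = γ' s (t * u) := γkey s t u
    have g2 : ∀ w v : h, Bh (αh (t * u) s w) (D v) = γ' s (t * u) * Bh w (D v) := by
      intro w v
      rw [hα3, hαD1, map_smul, smul_eq_mul]
    have g3 : ∀ w v : h, Bh w (D v) = - Bh (D w) v := by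
      intro w v; rw [hskew]; ring
    simp only [hγinv, g1, g2, g3]
    ring
  refine ⟨hBbarsymm, nondeg, ?_⟩
  intro U V W
  induction U using TensorProduct.induction_on with
  | zero => simp
  | add u1 u2 ih1 ih2 => simp only [map_add, LinearMap.add_apply, ih1, ih2]
  | tmul s p =>
    induction V using TensorProduct.induction_on with
    | zero => simp
    | add v1 v2 ih1 ih2 => simp only [map_add, LinearMap.add_apply, ih1, ih2]
    | tmul t q =>
      induction W using TensorProduct.induction_on with
      | zero => simp
      | add w1 w2 ih1 ih2 => simp only [map_add, LinearMap.add_apply, ih1, ih2]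
      | tmul u r => exact keyInv s t u p q r
end

section
/- Let g be a Lie algebra and S a commutative associative unital algebra, and suppose the current Lie algebra g⊗S admits an invariant metric B̄. Let F : g⊗S → g be a surjective linear map, s a non-zero element of S, H : g → g⊗S linear with F∘H = Id_g, and ψ_s = H* ∘ B̄^♭ ∘ ι_s : g → g*. Then B̄^♭ ∘ ι_s = F* ∘ ψ_s (i.e. B̄(x⊗s, u) = ψ_s(x)(F(u)) for all x in g, u in g⊗S) if and only if the B̄-orthogonal complement of Im(ι_s) equals Ker(F). Moreover, when this holds, ψ_s is bijective. -/
open TensorProduct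

/-- Suppose the current Lie algebra `g ⊗ S` has an invariant metric `B̄`. Let
`Fm : g⊗S → g` be surjective linear, `s ≠ 0` in `S`, `H : g → g⊗S` with
`Fm ∘ H = Id`, and `ψ_s = H* ∘ B̄^♭ ∘ ι_s`. Then `B̄^♭ ∘ ι_s = Fm* ∘ ψ_s`
(that is, `B̄(x⊗s, u) = ψ_s(x)(Fm u)`) iff the `B̄`-orthogonal complement of
`Im(ι_s)` equals `Ker(Fm)`; moreover in that case `ψ_s` is bijective. -/
theorem pair_commutes_iff_perp_eq_ker
    (F : Type*) [Field F] [CharZero F]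
    (g : Type*) [LieRing g] [LieAlgebra F g] [Module.Finite F g]
    (S : Type*) [CommRing S] [Algebra F S] [Module.Finite F S]
    (Bbar : LinearMap.BilinForm F (S ⊗[F] g))
    (hsymm : ∀ u v : S ⊗[F] g, Bbar u v = Bbar v u)
    (hnd : ∀ u : S ⊗[F] g, (∀ v : S ⊗[F] g, Bbar u v = 0) → u = 0)
    (hinv : ∀ u v w : S ⊗[F] g, Bbar ⁅u, v⁆ w = Bbar u ⁅v, w⁆)
    (Fm : (S ⊗[F] g) →ₗ[F] g) (hFm : Function.Surjective Fm)
    (s : S) (hs : s ≠ 0)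
    (H : g →ₗ[F] S ⊗[F] g) (hH : ∀ x : g, Fm (H x) = x) :
    ((∀ (x : g) (u : S ⊗[F] g), Bbar (s ⊗ₜ[F] x) u = Bbar (s ⊗ₜ[F] x) (H (Fm u))) ↔
      {u : S ⊗[F] g | ∀ x : g, Bbar (s ⊗ₜ[F] x) u = 0} = {u : S ⊗[F] g | Fm u = 0}) ∧
    ((∀ (x : g) (u : S ⊗[F] g), Bbar (s ⊗ₜ[F] x) u = Bbar (s ⊗ₜ[F] x) (H (Fm u))) →
      Function.Bijective
        (fun x : g => ((Bbar (s ⊗ₜ[F] x)) ∘ₗ H : Module.Dual F g))) := by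
  classical
  have : FiniteDimensional F g := ‹_›
  have : FiniteDimensional F (S ⊗[F] g) := Module.Finite.tensorProduct F S g
  -- a dual functional on S detecting s
  obtain ⟨φ, hφ⟩ : ∃ φ : Module.Dual F S, φ s ≠ 0 := by
    by_contra h
    push_neg at h
    exact hs ((Module.forall_dual_apply_eq_zero_iff F s).mp h)
  set ι : g →ₗ[F] S ⊗[F] g := TensorProduct.mk F S g s with hι
  have hιinj : Function.Injective ι := by
    intro x y hxy
    have := congrArg ((TensorProduct.lid F g).toLinearMap ∘ₗ LinearMap.rTensor g φ) hxy
    simp only [LinearMap.coe_comp, Function.comp_apply, hι, TensorProduct.mk_apply,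
      LinearMap.rTensor_tmul, LinearEquiv.coe_coe, TensorProduct.lid_tmul] at this
    exact smul_right_injective g hφ this
  have hrefl : Bbar.IsRefl := fun u v h => by rw [hsymm]; exact h
  have hndB : Bbar.Nondegenerate :=
    (LinearMap.IsRefl.nondegenerate_iff_separatingLeft hrefl).mpr hnd
  set W : Submodule F (S ⊗[F] g) := LinearMap.range ι with hW
  have hperp : {u : S ⊗[F] g | ∀ x : g, Bbar (s ⊗ₜ[F] x) u = 0}
      = ↑(Bbar.orthogonal W) := by
    ext u
    simp only [Set.mem_setOf_eq, SetLike.mem_coe, LinearMap.BilinForm.mem_orthogonal_iff]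
    constructor
    · rintro h n ⟨x, rfl⟩
      exact h x
    · intro h x
      exact h (s ⊗ₜ[F] x) ⟨x, rfl⟩
  have hkerset : {u : S ⊗[F] g | Fm u = 0} = ↑(LinearMap.ker Fm) := rfl
  have hfrW : Module.finrank F W = Module.finrank F g :=
    LinearMap.finrank_range_of_inj hιinj
  have hfrperp : Module.finrank F (Bbar.orthogonal W)
      = Module.finrank F (S ⊗[F] g) - Module.finrank F g := by
    rw [LinearMap.BilinForm.finrank_orthogonal hndB W, hfrW]
  have hfrker : Module.finrank F (LinearMap.ker Fm)
      = Module.finrank F (S ⊗[F] g) - Module.finrank F g := by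
    have h1 := LinearMap.finrank_range_add_finrank_ker Fm
    rw [LinearMap.range_eq_top.mpr hFm, finrank_top] at h1
    omega
  constructor
  · constructor
    · intro hpair
      rw [hperp, hkerset]
      have hle : LinearMap.ker Fm ≤ Bbar.orthogonal W := by
        intro u hu
        rw [LinearMap.mem_ker] at hu
        rw [LinearMap.BilinForm.mem_orthogonal_iff]
        rintro n ⟨x, rfl⟩
        show (Bbar (ι x)) u = 0
        have := hpair x u
        rw [hu, map_zero, map_zero] at this
        exact this
      have := Submodule.eq_of_le_of_finrank_eq hle (by rw [hfrker, hfrperp])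
      rw [this]
    · intro hset x u
      have hmem : u - H (Fm u) ∈ {u : S ⊗[F] g | Fm u = 0} := by
        simp [hH]
      rw [← hset] at hmem
      have := hmem x
      rw [map_sub] at this
      exact sub_eq_zero.mp this
  · intro hpair
    set Ψ : g →ₗ[F] Module.Dual F g :=
      H.dualMap ∘ₗ (Bbar ∘ₗ TensorProduct.mk F S g s) with hΨ
    have hΨeq : (fun x : g => ((Bbar (s ⊗ₜ[F] x)) ∘ₗ H : Module.Dual F g)) = ⇑Ψ := by
      funext x
      rfl
    rw [hΨeq]
    have hinj : Function.Injective Ψ := by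
      rw [← LinearMap.ker_eq_bot]
      rw [LinearMap.ker_eq_bot']
      intro x hx
      have hzero : ∀ u : S ⊗[F] g, Bbar (s ⊗ₜ[F] x) u = 0 := by
        intro u
        rw [hpair x u]
        have := LinearMap.congr_fun hx (Fm u)
        simpa [hΨ] using this
      have := hnd _ hzero
      have : ι x = ι 0 := by simpa [hι] using this
      exact hιinj this
    exact ⟨hinj, (LinearMap.injective_iff_surjective_of_finrank_eq_finrank
      Subspace.dual_finrank_eq.symm).mp hinj⟩
end

section
/- Let g be a perfect Lie algebra (g = [g,g]) and S an m-dimensional commutative associative unital algebra containing an element s with s^m = 0 and s^{m-1} ≠ 0 (so S is spanned by 1, s, ..., s^{m-1}). If the current Lie algebra g⊗S admits an invariant metric B̄, then the bilinear form B(x,y) = B̄(x⊗s^{m-1}, y⊗1) is an invariant metric on g; in particular g admits an invariant metric. -/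
open TensorProduct

/-- Let `g` be a perfect Lie algebra and `S` an `m`-dimensional commutative associative
unital algebra containing `s` with `s^m = 0` and `s^{m-1} ≠ 0`. If the current Lie
algebra `g ⊗ S` admits an invariant metric `B̄`, then
`B(x,y) = B̄(x ⊗ s^{m-1}, y ⊗ 1)` is an invariant metric on `g`. -/
theorem perfect_current_metric_descends
    (F : Type*) [Field F] [CharZero F]
    (g : Type*) [LieRing g] [LieAlgebra F g] [Module.Finite F g]
    (hperf : ∀ z : g, z ∈ Submodule.span F {w : g | ∃ x y : g, ⁅x, y⁆ = w})
    (S : Type*) [CommRing S] [Algebra F S] [Module.Finite F S]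
    (m : ℕ) (hm : Module.finrank F S = m)
    (s : S) (hs1 : s ^ m = 0) (hs2 : s ^ (m - 1) ≠ 0)
    (Bbar : LinearMap.BilinForm F (S ⊗[F] g))
    (hsymm : ∀ u v : S ⊗[F] g, Bbar u v = Bbar v u)
    (hnd : ∀ u : S ⊗[F] g, (∀ v : S ⊗[F] g, Bbar u v = 0) → u = 0)
    (hinv : ∀ u v w : S ⊗[F] g, Bbar ⁅u, v⁆ w = Bbar u ⁅v, w⁆) :
    (∀ x y : g,
      Bbar ((s ^ (m - 1)) ⊗ₜ[F] x) ((1 : S) ⊗ₜ[F] y)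
        = Bbar ((s ^ (m - 1)) ⊗ₜ[F] y) ((1 : S) ⊗ₜ[F] x)) ∧
    (∀ x : g, (∀ y : g, Bbar ((s ^ (m - 1)) ⊗ₜ[F] x) ((1 : S) ⊗ₜ[F] y) = 0) → x = 0) ∧
    (∀ x y z : g,
      Bbar ((s ^ (m - 1)) ⊗ₜ[F] ⁅x, y⁆) ((1 : S) ⊗ₜ[F] z)
        = Bbar ((s ^ (m - 1)) ⊗ₜ[F] x) ((1 : S) ⊗ₜ[F] ⁅y, z⁆)) := by
  -- the "sliding" lemma: for perfect `g`, scalars can be moved across the form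
  have slide : ∀ (a b : S) (x y : g),
      Bbar ((a * b) ⊗ₜ[F] x) ((1 : S) ⊗ₜ[F] y) = Bbar (a ⊗ₜ[F] x) (b ⊗ₜ[F] y) := by
    intro a b x y
    have hx := hperf x
    induction hx using Submodule.span_induction with
    | mem w hw =>
      obtain ⟨p, q, rfl⟩ := hw
      have e1 : (a * b) ⊗ₜ[F] ⁅p, q⁆ = ⁅a ⊗ₜ[F] p, b ⊗ₜ[F] q⁆ := by
        rw [LieAlgebra.ExtendScalars.bracket_tmul]
      have e2 : a ⊗ₜ[F] ⁅p, q⁆ = ⁅a ⊗ₜ[F] p, (1 : S) ⊗ₜ[F] q⁆ := by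
        rw [LieAlgebra.ExtendScalars.bracket_tmul, mul_one]
      have e3 : ⁅b ⊗ₜ[F] q, (1 : S) ⊗ₜ[F] y⁆ = ⁅(1 : S) ⊗ₜ[F] q, b ⊗ₜ[F] y⁆ := by
        rw [LieAlgebra.ExtendScalars.bracket_tmul, LieAlgebra.ExtendScalars.bracket_tmul,
          mul_one, one_mul]
      rw [e1, hinv, e3, ← hinv, ← e2]
    | zero => simp
    | add u v hu hv ihu ihv => simp [TensorProduct.tmul_add, ihu, ihv]
    | smul c u hu ihu =>
      rw [TensorProduct.tmul_smul, TensorProduct.tmul_smul, map_smul, LinearMap.smul_apply,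
        map_smul, LinearMap.smul_apply, ihu]
  refine ⟨?_, ?_, ?_⟩
  · -- symmetry
    intro x y
    have h := slide 1 (s ^ (m - 1)) y x
    rw [one_mul] at h
    exact (hsymm _ _).trans h.symm
  · -- non-degeneracy
    intro x hx
    have hS : Nontrivial S := nontrivial_of_ne _ _ hs2
    have hmpos : 0 < m := by
      rcases Nat.eq_zero_or_pos m with h | h
      · exact absurd (hm ▸ h.symm ▸ Module.finrank_pos (R := F) (M := S)) (by omega)
      · exact h
    have hz : ∀ k, m ≤ k → s ^ k = 0 := by
      intro k hk
      have : s ^ k = s ^ m * s ^ (k - m) := by rw [← pow_add]; congr 1; omega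
      rw [this, hs1, zero_mul]
    -- powers of s are linearly independent
    have li : LinearIndependent F (fun i : Fin m => s ^ (i : ℕ)) := by
      rw [Fintype.linearIndependent_iff]
      intro c hc
      have key : ∀ j : Fin m, (∀ i : Fin m, i < j → c i = 0) → c j = 0 := by
        intro j hj
        have h1 := congrArg (· * s ^ (m - 1 - (j : ℕ))) hc
        simp only [Finset.sum_mul, zero_mul, smul_mul_assoc, ← pow_add] at h1
        have h2 : ∀ i : Fin m, i ∈ Finset.univ → i ≠ j →
            c i • s ^ ((i : ℕ) + (m - 1 - (j : ℕ))) = 0 := by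
          intro i _ hij
          rcases lt_or_gt_of_ne hij with hlt | hgt
          · rw [hj i hlt, zero_smul]
          · have : (i : ℕ) + (m - 1 - (j : ℕ)) ≥ m := by
              have := i.2; have := j.2
              have : (j : ℕ) < (i : ℕ) := hgt
              omega
            rw [hz _ this, smul_zero]
        rw [Finset.sum_eq_single j h2 (fun h => absurd (Finset.mem_univ j) h)] at h1
        have hj1 : (j : ℕ) + (m - 1 - (j : ℕ)) = m - 1 := by have := j.2; omega
        rw [hj1] at h1
        rcases smul_eq_zero.mp h1 with h | h
        · exact h
        · exact absurd h hs2
      have all : ∀ n : ℕ, ∀ j : Fin m, (j : ℕ) = n → c j = 0 := by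
        intro n
        induction n using Nat.strong_induction_on with
        | _ n ih =>
          intro j hj
          refine key j fun i hi => ih (i : ℕ) (by rw [← hj]; exact hi) i rfl
      exact fun j => all (j : ℕ) j rfl
    haveI : Nonempty (Fin m) := ⟨⟨0, hmpos⟩⟩
    let bS : Module.Basis (Fin m) F S := basisOfLinearIndependentOfCardEqFinrank li (by simp [hm])
    have hbS : ∀ i : Fin m, bS i = s ^ (i : ℕ) := by
      intro i; rw [coe_basisOfLinearIndependentOfCardEqFinrank]
    -- multiplication by s^(m-1) lands in the line spanned by s^(m-1)
    have hline : ∀ b : S, ∃ c : F, s ^ (m - 1) * b = c • s ^ (m - 1) := by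
      intro b
      refine ⟨bS.repr b ⟨0, hmpos⟩, ?_⟩
      conv_lhs => rw [← bS.sum_repr b]
      rw [Finset.mul_sum]
      rw [Finset.sum_eq_single (⟨0, hmpos⟩ : Fin m)]
      · rw [hbS, mul_smul_comm]
        norm_num
      · intro i _ hi
        rw [hbS, mul_smul_comm, ← pow_add]
        have : m ≤ m - 1 + (i : ℕ) := by
          have : (i : ℕ) ≠ 0 := fun h => hi (Fin.ext h)
          omega
        rw [hz _ this, smul_zero]
      · intro h; exact absurd (Finset.mem_univ _) h
    have hall : ∀ v : S ⊗[F] g, Bbar ((s ^ (m - 1)) ⊗ₜ[F] x) v = 0 := by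
      intro v
      induction v using TensorProduct.induction_on with
      | zero => simp
      | tmul b y =>
        obtain ⟨c, hc⟩ := hline b
        rw [← slide (s ^ (m - 1)) b x y, hc, ← TensorProduct.smul_tmul', map_smul,
          LinearMap.smul_apply, hx y, smul_zero]
      | add u v hu hv => rw [map_add, hu, hv, add_zero]
    have h0 : (s ^ (m - 1)) ⊗ₜ[F] x = 0 := hnd _ hall
    -- extract x = 0 using a dual functional
    have : ¬∀ φ : Module.Dual F S, φ (s ^ (m - 1)) = 0 := by
      rw [Module.forall_dual_apply_eq_zero_iff]; exact hs2
    push_neg at this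
    obtain ⟨φ, hφ⟩ := this
    have hT := congrArg (fun v => (TensorProduct.lid F g) ((LinearMap.rTensor g φ) v)) h0
    simp only [LinearMap.rTensor_tmul, TensorProduct.lid_tmul, map_zero] at hT
    rcases smul_eq_zero.mp hT with h | h
    · exact absurd h hφ
    · exact h
  · -- invariance
    intro x y z
    have e1 : (s ^ (m - 1)) ⊗ₜ[F] ⁅x, y⁆ = ⁅(s ^ (m - 1)) ⊗ₜ[F] x, (1 : S) ⊗ₜ[F] y⁆ := by
      rw [LieAlgebra.ExtendScalars.bracket_tmul, mul_one]
    have e2 : (1 : S) ⊗ₜ[F] ⁅y, z⁆ = ⁅(1 : S) ⊗ₜ[F] y, (1 : S) ⊗ₜ[F] z⁆ := by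
      rw [LieAlgebra.ExtendScalars.bracket_tmul, mul_one]
    rw [e1, hinv, ← e2]
end
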